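/- arXiv:1409.5008 — 2 statements merged into one kernel-verified Lean document; each statement's English description precedes it below -/
import Mathlib

section
/- If P is strongly contained in Q (P ⊆ Q and ∂P ∩ ∂Q = ∅, with 0 ∈ int Q), then there exists μ < 1 and an sos representation of μ - x^T z in the quadratic module generated by the linear constraints of P × Q°; hence the semidefinite hierarchy certifies containment after finitely many steps. -/
section Auxiliary
open MvPolynomial

namespace Cert
variable {ι : Type*}

/-- sums of squares, as an additive-closure predicate -/
def Sos (p : MvPolynomial ι ℝ) : Prop :=
  p ∈ AddSubmonoid.closure (Set.range (fun q : MvPolynomial ι ℝ => q ^ 2))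

lemma sos_zero : Sos (0 : MvPolynomial ι ℝ) := zero_mem _
lemma sos_sq (q : MvPolynomial ι ℝ) : Sos (q ^ 2) := AddSubmonoid.subset_closure ⟨q, rfl⟩
lemma sos_add {p q : MvPolynomial ι ℝ} (hp : Sos p) (hq : Sos q) : Sos (p + q) := add_mem hp hq
lemma sos_one : Sos (1 : MvPolynomial ι ℝ) := by simpa using sos_sq (1 : MvPolynomial ι ℝ)

lemma sos_sq_mul (r : MvPolynomial ι ℝ) {q : MvPolynomial ι ℝ} (hq : Sos q) :
    Sos (r ^ 2 * q) := by
  induction hq using AddSubmonoid.closure_induction with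
  | mem x hx => obtain ⟨s, rfl⟩ := hx; simpa [mul_pow] using sos_sq (r * s)
  | zero => simpa using sos_zero
  | add x y _ _ hx hy => simpa [mul_add] using sos_add hx hy

lemma sos_mul {p q : MvPolynomial ι ℝ} (hp : Sos p) (hq : Sos q) : Sos (p * q) := by
  induction hp using AddSubmonoid.closure_induction with
  | mem x hx => obtain ⟨s, rfl⟩ := hx; exact sos_sq_mul s hq
  | zero => simpa using sos_zero
  | add x y _ _ hx hy => simpa [add_mul] using sos_add hx hy

lemma sos_const {c : ℝ} (hc : 0 ≤ c) : Sos (C c : MvPolynomial ι ℝ) := by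
  have : (C (Real.sqrt c) : MvPolynomial ι ℝ) ^ 2 = C c := by
    rw [← map_pow, Real.sq_sqrt hc]
  simpa [this] using sos_sq (C (Real.sqrt c) : MvPolynomial ι ℝ)

lemma sos_const_mul {c : ℝ} (hc : 0 ≤ c) {q : MvPolynomial ι ℝ} (hq : Sos q) :
    Sos (C c * q) := sos_mul (sos_const hc) hq

lemma sos_sum {s : Finset α} {f : α → MvPolynomial ι ℝ} (h : ∀ i ∈ s, Sos (f i)) :
    Sos (∑ i ∈ s, f i) := sum_mem h

lemma sos_of_fin {n : ℕ} (h : Fin n → MvPolynomial ι ℝ) : Sos (∑ i, h i ^ 2) :=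
  sos_sum (fun i _ => sos_sq (h i))

lemma sos_fin_rep {p : MvPolynomial ι ℝ} (hp : Sos p) :
    ∃ (n : ℕ) (h : Fin n → MvPolynomial ι ℝ), p = ∑ i, h i ^ 2 := by
  induction hp using AddSubmonoid.closure_induction with
  | mem x hx => obtain ⟨s, rfl⟩ := hx; exact ⟨1, fun _ => s, by simp⟩
  | zero => exact ⟨0, fun i => 0, by simp⟩
  | add x y _ _ hx hy =>
    obtain ⟨n, h, rfl⟩ := hx; obtain ⟨m, g, rfl⟩ := hy
    exact ⟨n + m, Fin.addCases h g, by rw [Fin.sum_univ_add]; simp⟩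


structure IsQM (M : Set (MvPolynomial ι ℝ)) : Prop where
  add : ∀ {p q : MvPolynomial ι ℝ}, p ∈ M → q ∈ M → p + q ∈ M
  sq_mul : ∀ (p : MvPolynomial ι ℝ) {q : MvPolynomial ι ℝ}, q ∈ M → p ^ 2 * q ∈ M
  one : (1 : MvPolynomial ι ℝ) ∈ M

namespace IsQM
variable {M : Set (MvPolynomial ι ℝ)}

lemma zero_mem (hM : IsQM M) : (0 : MvPolynomial ι ℝ) ∈ M := by
  simpa using hM.sq_mul 0 hM.one

lemma sos_mul_mem (hM : IsQM M) {σ q : MvPolynomial ι ℝ} (hσ : Sos σ) (hq : q ∈ M) : σ * q ∈ M := by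
  induction hσ using AddSubmonoid.closure_induction with
  | mem x hx => obtain ⟨s, rfl⟩ := hx; exact hM.sq_mul s hq
  | zero => simpa using hM.zero_mem
  | add x y _ _ hx hy => simpa [add_mul] using hM.add hx hy

lemma sos_mem (hM : IsQM M) {σ : MvPolynomial ι ℝ} (hσ : Sos σ) : σ ∈ M := by
  simpa using hM.sos_mul_mem hσ hM.one

lemma const_mem (hM : IsQM M) {c : ℝ} (hc : 0 ≤ c) : (C c : MvPolynomial ι ℝ) ∈ M := by
  have : (C (Real.sqrt c) : MvPolynomial ι ℝ) ^ 2 = C c := by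
    rw [← map_pow, Real.sq_sqrt hc]
  simpa [this] using hM.sq_mul (C (Real.sqrt c)) hM.one

lemma const_mul_mem (hM : IsQM M) {c : ℝ} (hc : 0 ≤ c) {q : MvPolynomial ι ℝ} (hq : q ∈ M) :
    (C c : MvPolynomial ι ℝ) * q ∈ M := by
  have : (C (Real.sqrt c) : MvPolynomial ι ℝ) ^ 2 = C c := by
    rw [← map_pow, Real.sq_sqrt hc]
  simpa [this] using hM.sq_mul (C (Real.sqrt c)) hq

lemma sum_mem (hM : IsQM M) {s : Finset α} {f : α → MvPolynomial ι ℝ} (h : ∀ i ∈ s, f i ∈ M) :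
    (∑ i ∈ s, f i) ∈ M := by
  classical
  induction s using Finset.induction with
  | empty => simpa using hM.zero_mem
  | insert x s hx ih =>
    rw [Finset.sum_insert hx]
    exact hM.add (h _ (Finset.mem_insert_self _ _))
      (ih (fun i hi => h i (Finset.mem_insert_of_mem hi)))

/-- `c ± u ∈ M` implies `c² - u² ∈ M`. -/
lemma sq_sub_sq_mem (hM : IsQM M) {c : ℝ} (hc : 0 < c) {u : MvPolynomial ι ℝ}
    (h1 : C c - u ∈ M) (h2 : C c + u ∈ M) : C (c ^ 2) - u ^ 2 ∈ M := by
  have key : C (c ^ 2) - u ^ 2 =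
      C (1 / (2 * c)) * ((C c - u) ^ 2 * (C c + u) + (C c + u) ^ 2 * (C c - u)) := by
    have h2c : (2 : ℝ) * c ≠ 0 := by positivity
    have : (C ((1 / (2 * c)) * (2 * c)) : MvPolynomial ι ℝ) = C 1 := by
      rw [one_div_mul_cancel h2c]
    calc C (c ^ 2) - u ^ 2
        = C ((1 / (2 * c)) * (2 * c)) * (C (c ^ 2) - u ^ 2) := by rw [this]; simp
      _ = C (1 / (2 * c)) * ((C c - u) ^ 2 * (C c + u) + (C c + u) ^ 2 * (C c - u)) := by
          rw [map_mul, map_mul, map_pow, map_ofNat]; ring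
  rw [key]
  exact hM.const_mul_mem (by positivity)
    (hM.add (hM.sq_mul _ h2) (hM.sq_mul _ h1))

/-- `c² - u² ∈ M` implies `c - u ∈ M`. -/
lemma sub_mem_of_sq (hM : IsQM M) {c : ℝ} (hc : 0 < c) {u : MvPolynomial ι ℝ}
    (h : C (c ^ 2) - u ^ 2 ∈ M) : C c - u ∈ M := by
  have key : C c - u = C (1 / (2 * c)) * ((C (c ^ 2) - u ^ 2) + (C c - u) ^ 2) := by
    have h2c : (2 : ℝ) * c ≠ 0 := by positivity
    have h1 : (C ((1 / (2 * c)) * (2 * c)) : MvPolynomial ι ℝ) = C 1 := by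
      rw [one_div_mul_cancel h2c]
    calc C c - u = C ((1 / (2 * c)) * (2 * c)) * (C c - u) := by rw [h1]; simp
      _ = C (1 / (2 * c)) * ((C (c ^ 2) - u ^ 2) + (C c - u) ^ 2) := by
          rw [map_mul, map_mul, map_pow, map_ofNat]; ring
  rw [key]
  exact hM.const_mul_mem (by positivity) (hM.add h (by simpa using hM.sq_mul (C c - u) hM.one))

end IsQM

/-- polynomials bounded (in absolute value) by a constant modulo `M` -/
def Bnd (M : Set (MvPolynomial ι ℝ)) : Set (MvPolynomial ι ℝ) :=
  {p | ∃ c : ℝ, 0 < c ∧ C c - p ∈ M ∧ C c + p ∈ M}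

namespace Bnd
variable {M : Set (MvPolynomial ι ℝ)}

lemma const (hM : IsQM M) (r : ℝ) : (C r : MvPolynomial ι ℝ) ∈ Bnd M := by
  refine ⟨|r| + 1, by positivity, ?_, ?_⟩
  · rw [← map_sub]; exact hM.const_mem (by cases abs_cases r <;> linarith)
  · rw [← map_add]; exact hM.const_mem (by cases abs_cases r <;> linarith)

lemma neg (hM : IsQM M) {p : MvPolynomial ι ℝ} (hp : p ∈ Bnd M) : -p ∈ Bnd M := by
  obtain ⟨c, hc, h1, h2⟩ := hp
  exact ⟨c, hc, by rwa [sub_neg_eq_add], by rwa [← sub_eq_add_neg]⟩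

lemma add (hM : IsQM M) {p q : MvPolynomial ι ℝ} (hp : p ∈ Bnd M) (hq : q ∈ Bnd M) :
    p + q ∈ Bnd M := by
  obtain ⟨c, hc, h1, h2⟩ := hp; obtain ⟨d, hd, h3, h4⟩ := hq
  refine ⟨c + d, by positivity, ?_, ?_⟩
  · have := hM.add h1 h3; rw [map_add]; convert this using 1; ring
  · have := hM.add h2 h4; rw [map_add]; convert this using 1; ring

lemma sq (hM : IsQM M) {p : MvPolynomial ι ℝ} (hp : p ∈ Bnd M) : p ^ 2 ∈ Bnd M := by
  obtain ⟨c, hc, h1, h2⟩ := hp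
  refine ⟨c ^ 2, by positivity, hM.sq_sub_sq_mem hc h1 h2, ?_⟩
  exact hM.add (hM.const_mem (by positivity)) (by simpa using hM.sq_mul p hM.one)

lemma const_mul (hM : IsQM M) (r : ℝ) {p : MvPolynomial ι ℝ} (hp : p ∈ Bnd M) :
    C r * p ∈ Bnd M := by
  rcases le_or_gt r 0 with hr | hr
  · rcases eq_or_lt_of_le hr with rfl | hr'
    · simpa using const hM 0
    · obtain ⟨c, hc, h1, h2⟩ := neg hM hp
      have e : C (-r) * (-p) = (C r : MvPolynomial ι ℝ) * p := by rw [map_neg]; ring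
      refine ⟨(-r) * c, mul_pos (by linarith) hc, ?_, ?_⟩
      · have := hM.const_mul_mem (by linarith : (0:ℝ) ≤ -r) h1
        rw [mul_sub, ← map_mul] at this; rwa [e] at this
      · have := hM.const_mul_mem (by linarith : (0:ℝ) ≤ -r) h2
        rw [mul_add, ← map_mul] at this; rwa [e] at this
  · obtain ⟨c, hc, h1, h2⟩ := hp
    refine ⟨r * c, by positivity, ?_, ?_⟩
    · have := hM.const_mul_mem hr.le h1
      rw [mul_sub, ← map_mul] at this; exact this
    · have := hM.const_mul_mem hr.le h2
      rw [mul_add, ← map_mul] at this; exact this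

lemma sub (hM : IsQM M) {p q : MvPolynomial ι ℝ} (hp : p ∈ Bnd M) (hq : q ∈ Bnd M) :
    p - q ∈ Bnd M := by
  have := add hM hp (neg hM hq); simpa [sub_eq_add_neg] using this

lemma mul (hM : IsQM M) {p q : MvPolynomial ι ℝ} (hp : p ∈ Bnd M) (hq : q ∈ Bnd M) :
    p * q ∈ Bnd M := by
  have h1 : (p + q) ^ 2 ∈ Bnd M := sq hM (add hM hp hq)
  have h2 : (p - q) ^ 2 ∈ Bnd M := sq hM (sub hM hp hq)
  have h4 : (C (1/4 : ℝ) : MvPolynomial ι ℝ) * 4 = 1 := by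
    rw [show ((4 : MvPolynomial ι ℝ)) = C (4:ℝ) from (map_ofNat C 4).symm, ← map_mul]
    norm_num
  have key : p * q = C (1/4 : ℝ) * ((p + q) ^ 2 - (p - q) ^ 2) := by
    calc p * q = C (1/4 : ℝ) * 4 * (p * q) := by rw [h4, one_mul]
      _ = C (1/4 : ℝ) * ((p + q) ^ 2 - (p - q) ^ 2) := by ring
  rw [key]
  exact const_mul hM _ (sub hM h1 h2)

end Bnd

/-- Archimedean property: everything is bounded, given a ball constraint. -/
lemma arch [Fintype ι] {M : Set (MvPolynomial ι ℝ)} (hM : IsQM M) {N : ℝ}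
    (hball : C N - (∑ i : ι, X i ^ 2) ∈ M) (p : MvPolynomial ι ℝ) :
    p ∈ Bnd M := by
  classical
  -- each variable is bounded
  have hX : ∀ i : ι, (X i : MvPolynomial ι ℝ) ∈ Bnd M := by
    intro i
    set c : ℝ := Real.sqrt (max N 0) + 1 with hc
    have hcpos : 0 < c := by positivity
    have hc2 : N ≤ c ^ 2 := by
      have h1 : max N 0 ≤ (Real.sqrt (max N 0)) ^ 2 := by
        rw [Real.sq_sqrt (le_max_right N 0)]
      nlinarith [Real.sqrt_nonneg (max N 0), le_max_left N 0]
    have hXi2 : C (c ^ 2) - (X i : MvPolynomial ι ℝ) ^ 2 ∈ M := by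
      have hsum : C N - (X i : MvPolynomial ι ℝ) ^ 2
          = (C N - ∑ j : ι, X j ^ 2) + ∑ j ∈ Finset.univ.erase i, X j ^ 2 := by
        rw [← Finset.add_sum_erase _ _ (Finset.mem_univ i)]; ring
      have h1 : C N - (X i : MvPolynomial ι ℝ) ^ 2 ∈ M := by
        rw [hsum]
        exact hM.add hball (hM.sum_mem (fun j _ => by simpa using hM.sq_mul (X j) hM.one))
      have : C (c ^ 2) - (X i : MvPolynomial ι ℝ) ^ 2
          = C (c ^ 2 - N) + (C N - X i ^ 2) := by rw [map_sub]; ring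
      rw [this]
      exact hM.add (hM.const_mem (by linarith)) h1
    have hpos := hM.sub_mem_of_sq hcpos hXi2
    have hneg : C c + (X i : MvPolynomial ι ℝ) ∈ M := by
      have := hM.sub_mem_of_sq (u := -(X i)) hcpos (by simpa using hXi2)
      simpa [sub_neg_eq_add] using this
    exact ⟨c, hcpos, hpos, hneg⟩
  -- Bnd M is a subalgebra
  let S : Subalgebra ℝ (MvPolynomial ι ℝ) :=
    { carrier := Bnd M
      add_mem' := fun {x y} h1 h2 => Bnd.add hM h1 h2
      mul_mem' := fun {x y} h1 h2 => Bnd.mul hM h1 h2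
      one_mem' := by simpa using Bnd.const hM (ι := ι) (1 : ℝ)
      zero_mem' := by simpa using Bnd.const hM (ι := ι) (0 : ℝ)
      algebraMap_mem' := fun r => by simpa [MvPolynomial.algebraMap_eq] using Bnd.const hM (ι := ι) r }
  have hS : S = ⊤ := by
    rw [eq_top_iff, ← MvPolynomial.adjoin_range_X]
    exact Algebra.adjoin_le (by rintro x ⟨i, rfl⟩; exact hX i)
  have : p ∈ S := by rw [hS]; trivial
  exact this



/-- extension of a quadratic module by one element -/
def qmExt (M : Set (MvPolynomial ι ℝ)) (p : MvPolynomial ι ℝ) : Set (MvPolynomial ι ℝ) :=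
  {q | ∃ m ∈ M, ∃ σ, Sos σ ∧ q = m + σ * p}

lemma isQM_qmExt {M : Set (MvPolynomial ι ℝ)} (hM : IsQM M) (p : MvPolynomial ι ℝ) :
    IsQM (qmExt M p) := by
  constructor
  · rintro q r ⟨m, hm, σ, hσ, rfl⟩ ⟨m', hm', σ', hσ', rfl⟩
    exact ⟨m + m', hM.add hm hm', σ + σ', sos_add hσ hσ', by ring⟩
  · rintro r q ⟨m, hm, σ, hσ, rfl⟩
    exact ⟨r ^ 2 * m, hM.sq_mul r hm, r ^ 2 * σ, sos_sq_mul r hσ, by ring⟩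
  · exact ⟨1, hM.one, 0, sos_zero, by ring⟩

lemma subset_qmExt {M : Set (MvPolynomial ι ℝ)} (p : MvPolynomial ι ℝ) :
    M ⊆ qmExt M p := fun q hq => ⟨q, hq, 0, sos_zero, by ring⟩

lemma self_mem_qmExt {M : Set (MvPolynomial ι ℝ)} (hM : IsQM M) (p : MvPolynomial ι ℝ) :
    p ∈ qmExt M p := ⟨0, hM.zero_mem, 1, sos_one, by ring⟩

/-- Case 2 of Putinar: if `-1` lies in the extension of `M` by `-f`,
then (using Archimedeanity) `f ∈ M`. -/
lemma case2 [Fintype ι] {M : Set (MvPolynomial ι ℝ)} (hM : IsQM M) {N : ℝ}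
    (hball : C N - (∑ i : ι, X i ^ 2) ∈ M) {f : MvPolynomial ι ℝ}
    (h : (-1 : MvPolynomial ι ℝ) ∈ qmExt M (-f)) : f ∈ M := by
  obtain ⟨s, hs, t, ht, heq⟩ := h
  have htf : t * f = 1 + s := by linear_combination heq
  obtain ⟨lam0, hl0pos, _, hl0⟩ := arch hM hball f
  obtain ⟨c₁, hc₁, hb1, _⟩ := arch hM hball (t + t * s)
  obtain ⟨c₂, hc₂, hb2, _⟩ := arch hM hball (t * t)
  set c : ℝ := c₁ + lam0 * c₂ with hcdef
  have hcpos : 0 < c := by positivity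
  set Nr : ℝ := max c 1 with hNr
  have hNr1 : 1 ≤ Nr := le_max_right _ _
  have hNrc : c ≤ Nr := le_max_left _ _
  have hNrpos : 0 < Nr := lt_of_lt_of_le one_pos hNr1
  set δ : ℝ := 1 / Nr with hδ
  have hδpos : 0 < δ := by positivity
  have hδN : Nr * δ = 1 := by rw [hδ]; field_simp
  have hcδ : c * δ ≤ 1 := by
    calc c * δ ≤ Nr * δ := by apply mul_le_mul_of_nonneg_right hNrc hδpos.le
      _ = 1 := hδN
  -- the one-step descent
  have step : ∀ lam : ℝ, 0 ≤ lam → lam ≤ lam0 → f + C lam ∈ M → f + C (lam - δ) ∈ M := by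
    intro lam hlam hlam0 hmem
    have hm₁ : s + C lam * t ∈ M := hM.add hs (hM.const_mul_mem hlam (hM.sos_mem ht))
    have hinner : C c - (t + t * s + C lam * (t * t)) ∈ M := by
      have hid : C c - (t + t * s + C lam * (t * t)) =
          ((C c₁ - (t + t * s)) + C lam * (C c₂ - t * t)) + C ((lam0 - lam) * c₂) := by
        rw [hcdef]; simp only [map_add, map_mul, map_sub]; ring
      rw [hid]
      exact hM.add (hM.add hb1 (hM.const_mul_mem hlam hb2))
        (hM.const_mem (mul_nonneg (by linarith) hc₂.le))
    have hrep : f + C (lam - 2 * δ + c * δ ^ 2) =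
        (1 - C δ * t) ^ 2 * (f + C lam) + C (2 * δ) * (s + C lam * t)
          + C (δ ^ 2) * (C c - (t + t * s + C lam * (t * t))) := by
      simp only [map_add, map_sub, map_mul, map_pow, map_ofNat]
      linear_combination (2 * C δ - C δ ^ 2 * t) * htf
    have hmem' : f + C (lam - 2 * δ + c * δ ^ 2) ∈ M := by
      rw [hrep]
      exact hM.add (hM.add (hM.sq_mul _ hmem)
        (hM.const_mul_mem (by positivity) hm₁))
        (hM.const_mul_mem (by positivity) hinner)
    have : f + C (lam - δ) = (f + C (lam - 2 * δ + c * δ ^ 2)) + C (δ - c * δ ^ 2) := by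
      rw [add_assoc, ← map_add]; congr 2; ring
    rw [this]
    refine hM.add hmem' (hM.const_mem ?_)
    nlinarith [hδpos]
  -- descend
  have main : ∀ n : ℕ, f + C (max 0 (lam0 - n * δ)) ∈ M := by
    intro n
    induction n with
    | zero =>
      have : max 0 (lam0 - (0:ℕ) * δ) = lam0 := by
        simp [max_eq_right hl0pos.le]
      rw [this, add_comm]; exact hl0
    | succ n ih =>
      have hlam : 0 ≤ max 0 (lam0 - n * δ) := le_max_left _ _
      have hnδ : 0 ≤ (n : ℝ) * δ := by positivity
      have hlam0' : max 0 (lam0 - n * δ) ≤ lam0 :=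
        max_le hl0pos.le (by linarith)
      have hstep := step _ hlam hlam0' ih
      have hge : max 0 (lam0 - n * δ) - δ ≤ max 0 (lam0 - (n + 1 : ℕ) * δ) := by
        rcases le_total (lam0 - n * δ) 0 with h | h
        · rw [max_eq_left h]
          have := le_max_left (0:ℝ) (lam0 - ((n:ℕ) + 1 : ℕ) * δ)
          linarith
        · rw [max_eq_right h]
          have := le_max_right (0:ℝ) (lam0 - ((n:ℕ) + 1 : ℕ) * δ)
          push_cast at this ⊢
          linarith
      have heq2 : f + C (max 0 (lam0 - (n + 1 : ℕ) * δ)) =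
          (f + C (max 0 (lam0 - n * δ) - δ))
            + C (max 0 (lam0 - (n + 1 : ℕ) * δ) - (max 0 (lam0 - n * δ) - δ)) := by
        rw [add_assoc, ← map_add]; congr 2; ring
      rw [heq2]
      exact hM.add hstep (hM.const_mem (by linarith))
  obtain ⟨n, hn⟩ := exists_nat_ge (lam0 / δ)
  have hfin : max 0 (lam0 - n * δ) = 0 := by
    apply max_eq_left
    have : lam0 ≤ n * δ := by
      rw [div_le_iff₀ hδpos] at hn; linarith
    linarith
  have := main n
  rw [hfin] at this
  simpa using this

noncomputable def al (Q : Set (MvPolynomial ι ℝ)) (p : MvPolynomial ι ℝ) : ℝ :=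
  sInf {r : ℝ | C r - p ∈ Q}

section Alpha
variable {Q : Set (MvPolynomial ι ℝ)}

lemma neg_const_not_mem (hQ : IsQM Q) (hQ1 : (-1 : MvPolynomial ι ℝ) ∉ Q)
    {r : ℝ} (hr : r < 0) : (C r : MvPolynomial ι ℝ) ∉ Q := by
  intro hmem
  have hcoef : (0:ℝ) ≤ -1 / r := by
    rw [div_nonneg_iff]; right; constructor <;> [norm_num; exact hr.le]
  have := hQ.const_mul_mem hcoef hmem
  rw [← map_mul] at this
  have hval : -1 / r * r = -1 := div_mul_cancel₀ (-1) (ne_of_lt hr)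
  rw [hval] at this
  apply hQ1; rwa [map_neg, map_one] at this

lemma al_set_nonempty (hQ : IsQM Q) (harch : ∀ p, p ∈ Bnd Q) (p : MvPolynomial ι ℝ) :
    Set.Nonempty {r : ℝ | C r - p ∈ Q} := by
  obtain ⟨c, _, h1, _⟩ := harch p; exact ⟨c, h1⟩

lemma al_bddBelow (hQ : IsQM Q) (hQ1 : (-1 : MvPolynomial ι ℝ) ∉ Q)
    (harch : ∀ p, p ∈ Bnd Q) (p : MvPolynomial ι ℝ) :
    BddBelow {r : ℝ | C r - p ∈ Q} := by
  obtain ⟨c, _, _, h2⟩ := harch p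
  refine ⟨-c, fun r hr => ?_⟩
  by_contra hcon
  push_neg at hcon
  have : (C (r + c) : MvPolynomial ι ℝ) ∈ Q := by
    have := hQ.add hr h2
    rw [map_add]; convert this using 1; ring
  exact neg_const_not_mem hQ hQ1 (by linarith) this

lemma al_le_of_mem (hQ : IsQM Q) (hQ1 : (-1 : MvPolynomial ι ℝ) ∉ Q)
    (harch : ∀ p, p ∈ Bnd Q) {p : MvPolynomial ι ℝ} {r : ℝ}
    (h : C r - p ∈ Q) : al Q p ≤ r := csInf_le (al_bddBelow hQ hQ1 harch p) h

lemma mem_of_gt_al (hQ : IsQM Q) (harch : ∀ p, p ∈ Bnd Q) {p : MvPolynomial ι ℝ} {r : ℝ}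
    (h : al Q p < r) : C r - p ∈ Q := by
  obtain ⟨r', hr', hlt⟩ := exists_lt_of_csInf_lt (al_set_nonempty hQ harch p) h
  have : (C r : MvPolynomial ι ℝ) - p = C (r - r') + (C r' - p) := by
    rw [map_sub]; ring
  rw [this]
  exact hQ.add (hQ.const_mem (by linarith)) hr'

lemma mem_of_lt_al (hQ : IsQM Q) (hQ1 : (-1 : MvPolynomial ι ℝ) ∉ Q)
    (htot : ∀ p : MvPolynomial ι ℝ, p ∈ Q ∨ -p ∈ Q)
    (harch : ∀ p, p ∈ Bnd Q) {p : MvPolynomial ι ℝ} {r : ℝ}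
    (h : r < al Q p) : p - C r ∈ Q := by
  rcases htot (p - C r) with h' | h'
  · exact h'
  · exfalso
    rw [neg_sub] at h'
    exact absurd (al_le_of_mem hQ hQ1 harch h') (by linarith)

lemma al_const (hQ : IsQM Q) (hQ1 : (-1 : MvPolynomial ι ℝ) ∉ Q) (r : ℝ) :
    al Q (C r) = r := by
  have hset : {r' : ℝ | (C r' : MvPolynomial ι ℝ) - C r ∈ Q} = Set.Ici r := by
    ext r'
    simp only [Set.mem_setOf_eq, Set.mem_Ici]
    constructor
    · intro hmem
      by_contra hcon
      push_neg at hcon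
      rw [← map_sub] at hmem
      exact neg_const_not_mem hQ hQ1 (by linarith) hmem
    · intro hle
      rw [← map_sub]
      exact hQ.const_mem (by linarith)
  rw [al, hset, csInf_Ici]

lemma al_add (hQ : IsQM Q) (hQ1 : (-1 : MvPolynomial ι ℝ) ∉ Q)
    (htot : ∀ p : MvPolynomial ι ℝ, p ∈ Q ∨ -p ∈ Q)
    (harch : ∀ p, p ∈ Bnd Q) (p q : MvPolynomial ι ℝ) :
    al Q (p + q) = al Q p + al Q q := by
  apply le_antisymm
  · apply le_of_forall_pos_le_add
    intro ε hε
    have h1 : C (al Q p + ε/2) - p ∈ Q := mem_of_gt_al hQ harch (by linarith)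
    have h2 : C (al Q q + ε/2) - q ∈ Q := mem_of_gt_al hQ harch (by linarith)
    have hEq : (C ((al Q p + ε/2) + (al Q q + ε/2)) : MvPolynomial ι ℝ) - (p + q)
        = (C (al Q p + ε/2) - p) + (C (al Q q + ε/2) - q) := by
      rw [map_add]; ring
    have := al_le_of_mem hQ hQ1 harch (by rw [hEq]; exact hQ.add h1 h2)
    linarith
  · apply le_of_forall_pos_le_add
    intro ε hε
    have hp' : p - C (al Q p - ε/2) ∈ Q := mem_of_lt_al hQ hQ1 htot harch (by linarith)
    have hq' : q - C (al Q q - ε/2) ∈ Q := mem_of_lt_al hQ hQ1 htot harch (by linarith)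
    have hlb : al Q p + al Q q - ε ≤ al Q (p + q) := by
      apply le_csInf (al_set_nonempty hQ harch _)
      intro r hr
      by_contra hcon
      push_neg at hcon
      have hmem : (C (r - (al Q p - ε/2) - (al Q q - ε/2)) : MvPolynomial ι ℝ) ∈ Q := by
        have hmm := hQ.add (hQ.add hr hp') hq'
        have hEq : (C (r - (al Q p - ε/2) - (al Q q - ε/2)) : MvPolynomial ι ℝ)
            = (C r - (p + q)) + (p - C (al Q p - ε/2)) + (q - C (al Q q - ε/2)) := by
          simp only [map_sub]; ring
        rwa [hEq]
      exact neg_const_not_mem hQ hQ1 (by linarith) hmem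
    linarith

lemma al_zero (hQ : IsQM Q) (hQ1 : (-1 : MvPolynomial ι ℝ) ∉ Q) : al Q 0 = 0 := by
  have := al_const hQ hQ1 0
  rwa [map_zero] at this

lemma al_neg (hQ : IsQM Q) (hQ1 : (-1 : MvPolynomial ι ℝ) ∉ Q)
    (htot : ∀ p : MvPolynomial ι ℝ, p ∈ Q ∨ -p ∈ Q)
    (harch : ∀ p, p ∈ Bnd Q) (p : MvPolynomial ι ℝ) :
    al Q (-p) = - al Q p := by
  have h := al_add hQ hQ1 htot harch p (-p)
  rw [add_neg_cancel, al_zero hQ hQ1] at h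
  linarith

lemma al_nonneg_of_mem (hQ : IsQM Q) (hQ1 : (-1 : MvPolynomial ι ℝ) ∉ Q)
    (harch : ∀ p, p ∈ Bnd Q) {p : MvPolynomial ι ℝ} (hp : p ∈ Q) :
    0 ≤ al Q p := by
  by_contra hcon
  push_neg at hcon
  obtain ⟨r, hr1, hr2⟩ := exists_between hcon
  have h1 : C r - p ∈ Q := mem_of_gt_al hQ harch hr1
  have : (C r : MvPolynomial ι ℝ) ∈ Q := by
    have := hQ.add h1 hp; simpa using this
  exact neg_const_not_mem hQ hQ1 hr2 this

lemma al_const_mul (hQ : IsQM Q) (hQ1 : (-1 : MvPolynomial ι ℝ) ∉ Q)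
    (htot : ∀ p : MvPolynomial ι ℝ, p ∈ Q ∨ -p ∈ Q)
    (harch : ∀ p, p ∈ Bnd Q) (c : ℝ) (p : MvPolynomial ι ℝ) :
    al Q (C c * p) = c * al Q p := by
  -- first the case 0 < c
  have hpos : ∀ (c' : ℝ), 0 < c' → ∀ p' : MvPolynomial ι ℝ,
      al Q (C c' * p') = c' * al Q p' := by
    intro c' hc' p'
    apply le_antisymm
    · apply le_of_forall_pos_le_add
      intro ε hε
      have h1 : C (al Q p' + ε/c') - p' ∈ Q := mem_of_gt_al hQ harch
        (by have : 0 < ε/c' := by positivity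
            linarith)
      have h2 := hQ.const_mul_mem hc'.le h1
      rw [mul_sub, ← map_mul] at h2
      have := al_le_of_mem hQ hQ1 harch h2
      calc al Q (C c' * p') ≤ c' * (al Q p' + ε/c') := this
        _ = c' * al Q p' + ε := by field_simp
    · apply le_of_forall_pos_le_add
      intro ε hε
      have h1 : C (al Q (C c' * p') + ε) - C c' * p' ∈ Q :=
        mem_of_gt_al hQ harch (by linarith)
      have h2 := hQ.const_mul_mem (le_of_lt (show (0:ℝ) < 1/c' by positivity)) h1
      rw [mul_sub, ← map_mul, ← mul_assoc, ← map_mul] at h2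
      rw [show 1/c' * c' = 1 by field_simp, map_one, one_mul] at h2
      have := al_le_of_mem hQ hQ1 harch h2
      calc c' * al Q p' ≤ c' * (1/c' * (al Q (C c' * p') + ε)) := by
            apply mul_le_mul_of_nonneg_left this hc'.le
        _ = al Q (C c' * p') + ε := by field_simp
  rcases lt_trichotomy c 0 with hc | hc | hc
  · have : C c * p = C (-c) * (-p) := by rw [map_neg]; ring
    rw [this, hpos (-c) (by linarith) (-p), al_neg hQ hQ1 htot harch]
    ring
  · subst hc; rw [map_zero, zero_mul, zero_mul, al_zero hQ hQ1]
  · exact hpos c hc p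

lemma al_sq_of_zero (hQ : IsQM Q) (hQ1 : (-1 : MvPolynomial ι ℝ) ∉ Q)
    (htot : ∀ p : MvPolynomial ι ℝ, p ∈ Q ∨ -p ∈ Q)
    (harch : ∀ p, p ∈ Bnd Q) {u : MvPolynomial ι ℝ} (hu : al Q u = 0) :
    al Q (u ^ 2) = 0 := by
  have hge : 0 ≤ al Q (u ^ 2) :=
    al_nonneg_of_mem hQ hQ1 harch (by simpa using hQ.sq_mul u hQ.one)
  have hle : al Q (u ^ 2) ≤ 0 := by
    apply le_of_forall_pos_le_add
    intro ε hε
    set e : ℝ := Real.sqrt ε with he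
    have hepos : 0 < e := Real.sqrt_pos.mpr hε
    have h1 : C e - u ∈ Q := mem_of_gt_al hQ harch (by rw [hu]; exact hepos)
    have h2 : C e + u ∈ Q := by
      have := mem_of_lt_al hQ hQ1 htot harch (show -e < al Q u by rw [hu]; linarith)
      rwa [map_neg, sub_neg_eq_add, add_comm] at this
    have := hQ.sq_sub_sq_mem hepos h1 h2
    have hle' := al_le_of_mem hQ hQ1 harch this
    rw [Real.sq_sqrt hε.le] at hle'
    linarith
  linarith

lemma al_sq (hQ : IsQM Q) (hQ1 : (-1 : MvPolynomial ι ℝ) ∉ Q)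
    (htot : ∀ p : MvPolynomial ι ℝ, p ∈ Q ∨ -p ∈ Q)
    (harch : ∀ p, p ∈ Bnd Q) (p : MvPolynomial ι ℝ) :
    al Q (p ^ 2) = (al Q p) ^ 2 := by
  set t := al Q p with hT
  have hu : al Q (p - C t) = 0 := by
    rw [sub_eq_add_neg, ← map_neg, al_add hQ hQ1 htot harch, al_const hQ hQ1]
    ring
  have key : p ^ 2 = (p - C t) ^ 2 + (C (2*t) * p + C (-(t*t))) := by
    simp only [map_mul, map_neg, map_ofNat]
    ring
  rw [key, al_add hQ hQ1 htot harch, al_add hQ hQ1 htot harch,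
    al_sq_of_zero hQ hQ1 htot harch hu, al_const_mul hQ hQ1 htot harch,
    al_const hQ hQ1]
  ring

lemma al_mul (hQ : IsQM Q) (hQ1 : (-1 : MvPolynomial ι ℝ) ∉ Q)
    (htot : ∀ p : MvPolynomial ι ℝ, p ∈ Q ∨ -p ∈ Q)
    (harch : ∀ p, p ∈ Bnd Q) (p q : MvPolynomial ι ℝ) :
    al Q (p * q) = al Q p * al Q q := by
  have h2 : (C (1/2 : ℝ) : MvPolynomial ι ℝ) * 2 = 1 := by
    rw [show ((2 : MvPolynomial ι ℝ)) = C (2:ℝ) from (map_ofNat C 2).symm, ← map_mul]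
    norm_num
  have e : p * q = C (1/2 : ℝ) * ((p + q)^2 + (C (-1:ℝ)) * p^2 + C (-1:ℝ) * q^2) := by
    calc p * q = C (1/2:ℝ) * 2 * (p * q) := by rw [h2, one_mul]
      _ = _ := by simp only [map_neg, map_one]; ring
  rw [e, al_const_mul hQ hQ1 htot harch, al_add hQ hQ1 htot harch,
    al_add hQ hQ1 htot harch, al_const_mul hQ hQ1 htot harch,
    al_const_mul hQ hQ1 htot harch, al_sq hQ hQ1 htot harch,
    al_sq hQ hQ1 htot harch, al_sq hQ hQ1 htot harch,
    al_add hQ hQ1 htot harch]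
  ring

end Alpha

/-- Putinar's Positivstellensatz (Archimedean case). -/
theorem putinar [Fintype ι] {M : Set (MvPolynomial ι ℝ)} (hM : IsQM M) {N : ℝ}
    (hball : C N - (∑ i : ι, X i ^ 2) ∈ M) {f : MvPolynomial ι ℝ}
    (hf : ∀ w : ι → ℝ, (∀ m ∈ M, 0 ≤ aeval w m) → 0 < aeval w f) : f ∈ M := by
  by_cases hcase : (-1 : MvPolynomial ι ℝ) ∈ qmExt M (-f)
  · exact case2 hM hball hcase
  · exfalso
    set S : Set (Set (MvPolynomial ι ℝ)) :=
      {Q | IsQM Q ∧ qmExt M (-f) ⊆ Q ∧ (-1 : MvPolynomial ι ℝ) ∉ Q} with hS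
    have hM₀S : qmExt M (-f) ∈ S := ⟨isQM_qmExt hM _, subset_refl _, hcase⟩
    obtain ⟨Q, hQsub, hQmax⟩ := zorn_subset_nonempty S (fun c hcS hchain hcne => by
      obtain ⟨Q₀, hQ₀⟩ := hcne
      refine ⟨⋃₀ c, ⟨?_, ?_, ?_⟩, fun s hs => Set.subset_sUnion_of_mem hs⟩
      · constructor
        · rintro p q ⟨Q₁, hQ₁, hp⟩ ⟨Q₂, hQ₂, hq⟩
          rcases hchain.total hQ₁ hQ₂ with h | h
          · exact ⟨Q₂, hQ₂, (hcS hQ₂).1.add (h hp) hq⟩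
          · exact ⟨Q₁, hQ₁, (hcS hQ₁).1.add hp (h hq)⟩
        · rintro r q ⟨Q₁, hQ₁, hq⟩
          exact ⟨Q₁, hQ₁, (hcS hQ₁).1.sq_mul r hq⟩
        · exact ⟨Q₀, hQ₀, (hcS hQ₀).1.one⟩
      · exact (hcS hQ₀).2.1.trans (Set.subset_sUnion_of_mem hQ₀)
      · rintro ⟨Q₁, hQ₁, hmem⟩
        exact (hcS hQ₁).2.2 hmem) _ hM₀S
    obtain ⟨hQ, hMQ, hQ1⟩ := hQmax.1
    have hMsub : M ⊆ Q := (subset_qmExt (-f)).trans hMQ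
    have hfQ : -f ∈ Q := hMQ (self_mem_qmExt hM _)
    have harch : ∀ p, p ∈ Bnd Q := fun p => arch hQ (hMsub hball) p
    have htot : ∀ p : MvPolynomial ι ℝ, p ∈ Q ∨ -p ∈ Q := by
      intro p
      by_contra hcon
      push_neg at hcon
      obtain ⟨hp, hnp⟩ := hcon
      have himp : ∀ q : MvPolynomial ι ℝ, q ∉ Q → (-1 : MvPolynomial ι ℝ) ∈ qmExt Q q := by
        intro q hq
        by_contra hq1
        have hQS : qmExt Q q ∈ S := ⟨isQM_qmExt hQ q, hMQ.trans (subset_qmExt q), hq1⟩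
        have hsub2 := hQmax.2 hQS (subset_qmExt q)
        exact hq (hsub2 (self_mem_qmExt hQ q))
      obtain ⟨q₁, hq₁, σ₁, hσ₁, e₁⟩ := himp p hp
      obtain ⟨q₂, hq₂, σ₂, hσ₂, e₂⟩ := himp (-p) hnp
      have ideal : ∀ x : MvPolynomial ι ℝ, x ∈ Q → -x ∈ Q →
          ∀ y : MvPolynomial ι ℝ, y * x ∈ Q := by
        intro x hx hnx y
        have h2' : (C (1/2:ℝ) : MvPolynomial ι ℝ) ^ 2 * 4 = 1 := by
          rw [show ((4 : MvPolynomial ι ℝ)) = C (4:ℝ) from (map_ofNat C 4).symm,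
            ← map_pow, ← map_mul]
          norm_num
        have key : y * x = ((y+1) * C (1/2:ℝ))^2 * x + ((y-1) * C (1/2:ℝ))^2 * (-x) := by
          linear_combination (-(y * x)) * h2'
        rw [key]
        exact hQ.add (hQ.sq_mul _ hx) (hQ.sq_mul _ hnx)
      have hkey : σ₁ + σ₂ = -(σ₂ * q₁ + σ₁ * q₂) := by
        linear_combination (-σ₂) * e₁ + (-σ₁) * e₂
      have hsum_neg : -(σ₁ + σ₂) ∈ Q := by
        rw [hkey, neg_neg]
        exact hQ.add (hQ.sos_mul_mem hσ₂ hq₁) (hQ.sos_mul_mem hσ₁ hq₂)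
      have hσ₁neg : -σ₁ ∈ Q := by
        have heq3 : -σ₁ = σ₂ + -(σ₁+σ₂) := by ring
        rw [heq3]
        exact hQ.add (hQ.sos_mem hσ₂) hsum_neg
      have hσ₁p : σ₁ * p ∈ Q := by
        have := ideal σ₁ (hQ.sos_mem hσ₁) hσ₁neg p
        rwa [mul_comm] at this
      exact hQ1 (by rw [e₁]; exact hQ.add hq₁ hσ₁p)
    -- evaluation point
    set w : ι → ℝ := fun i => al Q (X i) with hw
    have halhom : ∀ p : MvPolynomial ι ℝ, al Q p = aeval w p := by
      intro p
      induction p using MvPolynomial.induction_on with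
      | C a => rw [al_const hQ hQ1, aeval_C]; rfl
      | add p q hp hq => rw [al_add hQ hQ1 htot harch, map_add, hp, hq]
      | mul_X p i hp => rw [al_mul hQ hQ1 htot harch, map_mul, hp, aeval_X]
    have hwK : ∀ m ∈ M, 0 ≤ aeval w m := fun m hm =>
      (halhom m) ▸ al_nonneg_of_mem hQ hQ1 harch (hMsub hm)
    have hfpos := hf w hwK
    have hfneg : 0 ≤ aeval w (-f) :=
      (halhom (-f)) ▸ al_nonneg_of_mem hQ hQ1 harch hfQ
    rw [map_neg] at hfneg
    linarith

lemma isQM_gen {κ : Type*} [Fintype κ] (G : κ → MvPolynomial ι ℝ) :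
    IsQM {p | ∃ σ₀, Sos σ₀ ∧ ∃ σ : κ → MvPolynomial ι ℝ,
      (∀ e, Sos (σ e)) ∧ p = σ₀ + ∑ e, σ e * G e} := by
  constructor
  · rintro p q ⟨s0, h0, σ, hσ, rfl⟩ ⟨t0, h1, τ, hτ, rfl⟩
    refine ⟨s0 + t0, sos_add h0 h1, fun e => σ e + τ e,
      fun e => sos_add (hσ e) (hτ e), ?_⟩
    rw [show (∑ e, (σ e + τ e) * G e) = ∑ e, (σ e * G e + τ e * G e) from
      Finset.sum_congr rfl (fun e _ => by ring), Finset.sum_add_distrib]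
    ring
  · rintro r q ⟨s0, h0, σ, hσ, rfl⟩
    refine ⟨r ^ 2 * s0, sos_sq_mul r h0, fun e => r ^ 2 * σ e,
      fun e => sos_sq_mul r (hσ e), ?_⟩
    rw [show (∑ e, r ^ 2 * σ e * G e) = ∑ e, r ^ 2 * (σ e * G e) from
      Finset.sum_congr rfl (fun e _ => by ring), ← Finset.mul_sum]
    ring
  · exact ⟨1, sos_one, fun _ => 0, fun _ => sos_zero, by simp⟩

lemma gen_mem {κ : Type*} [Fintype κ] [DecidableEq κ] (G : κ → MvPolynomial ι ℝ) (e : κ) :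
    G e ∈ {p | ∃ σ₀, Sos σ₀ ∧ ∃ σ : κ → MvPolynomial ι ℝ,
      (∀ e, Sos (σ e)) ∧ p = σ₀ + ∑ e, σ e * G e} := by
  refine ⟨0, sos_zero, fun e' => if e' = e then 1 else 0,
    fun e' => by
      by_cases h : e' = e
      · simpa [h] using sos_one (ι := ι)
      · simpa [h] using sos_zero (ι := ι), ?_⟩
  rw [show (∑ e', (if e' = e then (1:MvPolynomial ι ℝ) else 0) * G e')
      = ∑ e', (if e' = e then G e' else 0) from
    Finset.sum_congr rfl (fun e' _ => by split <;> simp)]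
  rw [Finset.sum_ite_eq' Finset.univ e G]
  simp

lemma lin_rep {d m : ℕ} (ξ : Fin d → ι) (a : Fin m → ℝ) (A : Fin m → Fin d → ℝ)
    (lam : Fin m → ℝ) (c : Fin d → ℝ) (hlam : ∑ i, lam i • A i = c) :
    (∑ i : Fin m, C (lam i) * (C (a i) - ∑ j : Fin d, C (A i j) * X (ξ j)) : MvPolynomial ι ℝ)
      = C (∑ i, lam i * a i) - ∑ j : Fin d, C (c j) * X (ξ j) := by
  have hc : ∀ j, c j = ∑ i, lam i * A i j := by
    intro j; rw [← hlam]; simp [Finset.sum_apply]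
  calc (∑ i : Fin m, C (lam i) * (C (a i) - ∑ j : Fin d, C (A i j) * X (ξ j)) : MvPolynomial ι ℝ)
      = ∑ i : Fin m, (C (lam i * a i) - ∑ j : Fin d, C (lam i * A i j) * X (ξ j)) := by
        apply Finset.sum_congr rfl; intro i _
        rw [mul_sub, ← map_mul, Finset.mul_sum]
        congr 1
        apply Finset.sum_congr rfl; intro j _
        rw [← mul_assoc, ← map_mul]
    _ = C (∑ i, lam i * a i) - ∑ j : Fin d, C (∑ i, lam i * A i j) * X (ξ j) := by
        rw [Finset.sum_sub_distrib]
        congr 1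
        · rw [map_sum]
        · rw [Finset.sum_comm]
          apply Finset.sum_congr rfl; intro j _
          rw [map_sum, Finset.sum_mul]
    _ = _ := by
        congr 1
        apply Finset.sum_congr rfl; intro j _
        rw [hc j]

lemma single_collapse {d : ℕ} (ξ : Fin d → ι) (j : Fin d) :
    (∑ j' : Fin d, (C ((Pi.single j 1 : Fin d → ℝ) j') : MvPolynomial ι ℝ) * X (ξ j')) = X (ξ j) := by
  classical
  have h : ∀ j', (C ((Pi.single j 1 : Fin d → ℝ) j') : MvPolynomial ι ℝ) * X (ξ j')
      = (if j' = j then X (ξ j') else 0 : MvPolynomial ι ℝ) := by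
    intro j'
    rcases eq_or_ne j' j with rfl | hne
    · simp
    · simp [Pi.single_apply, hne]
  rw [Finset.sum_congr rfl (fun j' _ => h j')]
  rw [Finset.sum_ite_eq' Finset.univ j (fun j' => X (ξ j'))]
  simp

lemma neg_single_collapse {d : ℕ} (ξ : Fin d → ι) (j : Fin d) :
    (∑ j' : Fin d, (C ((-(Pi.single j 1 : Fin d → ℝ)) j') : MvPolynomial ι ℝ) * X (ξ j')) = -X (ξ j) := by
  have h : ∀ j', (C ((-(Pi.single j 1 : Fin d → ℝ)) j') : MvPolynomial ι ℝ) * X (ξ j')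
      = -((C ((Pi.single j 1 : Fin d → ℝ) j') : MvPolynomial ι ℝ) * X (ξ j')) := by
    intro j'
    rw [Pi.neg_apply, map_neg, neg_mul]
  rw [Finset.sum_congr rfl (fun j' _ => h j'), Finset.sum_neg_distrib, single_collapse]


end Cert

section
open Matrix
namespace Cert2
variable {d : ℕ}

/-- Conic Carathéodory: a nonnegative combination can be rewritten with linearly
independent support. -/
lemma conic_caratheodory {k : ℕ} (v : Fin k → (Fin d → ℝ)) :
    ∀ (n : ℕ) (lam : Fin k → ℝ), (∀ i, 0 ≤ lam i) →
      (Finset.univ.filter (fun i => lam i ≠ 0)).card ≤ n →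
      ∃ s : Finset (Fin k), LinearIndependent ℝ (fun i : s => v i) ∧
        ∃ lam' : Fin k → ℝ, (∀ i, 0 ≤ lam' i) ∧ (∀ i ∉ s, lam' i = 0) ∧
          ∑ i, lam' i • v i = ∑ i, lam i • v i := by
  classical
  intro n
  induction n with
  | zero =>
    intro lam hlam hcard
    have hz : ∀ i, lam i = 0 := by
      intro i
      by_contra hne
      have : i ∈ Finset.univ.filter (fun i => lam i ≠ 0) := by simp [hne]
      have := Finset.card_pos.mpr ⟨i, this⟩
      omega
    refine ⟨∅, linearIndependent_empty_type, lam, hlam, fun i _ => hz i, rfl⟩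
  | succ n ih =>
    intro lam hlam hcard
    set supp := Finset.univ.filter (fun i => lam i ≠ 0) with hsupp
    by_cases hind : LinearIndependent ℝ (fun i : supp => v i)
    · refine ⟨supp, hind, lam, hlam, ?_, rfl⟩
      intro i hi
      by_contra hne
      exact hi (by simp [hsupp, hne])
    · -- extract a dependence
      rw [Fintype.not_linearIndependent_iff] at hind
      obtain ⟨g, hgsum, j₀, hgj₀⟩ := hind
      -- extend g to all of Fin k
      set mu0 : Fin k → ℝ := fun i => if h : i ∈ supp then g ⟨i, h⟩ else 0 with hmu0
      have hmusupp0 : ∀ i ∉ supp, mu0 i = 0 := by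
        intro i hi; simp [hmu0, hi]
      have hmusum0 : ∑ i, mu0 i • v i = 0 := by
        rw [← Finset.sum_subset (Finset.subset_univ supp)
          (fun i _ hi => by rw [hmusupp0 i hi, zero_smul])]
        rw [← Finset.sum_attach supp (fun i => mu0 i • v i)]
        rw [← hgsum]
        apply Finset.sum_congr rfl
        intro i _
        simp [hmu0, i.2]
      have hmune0 : mu0 (j₀ : Fin k) ≠ 0 := by
        simpa [hmu0, j₀.2] using hgj₀
      -- WLOG there is a positive entry
      obtain ⟨mu, hmusupp, hmusum, i₁, hmui₁⟩ :
          ∃ mu : Fin k → ℝ, (∀ i ∉ supp, mu i = 0) ∧ (∑ i, mu i • v i = 0) ∧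
            ∃ i, 0 < mu i := by
        rcases lt_or_gt_of_ne hmune0 with h | h
        · refine ⟨-mu0, fun i hi => by simp [hmusupp0 i hi], ?_, ⟨j₀, by simpa using h⟩⟩
          simp only [Pi.neg_apply, neg_smul, Finset.sum_neg_distrib, hmusum0, neg_zero]
        · exact ⟨mu0, hmusupp0, hmusum0, ⟨j₀, h⟩⟩
      set T : Finset (Fin k) := Finset.univ.filter (fun i => 0 < mu i) with hT
      have hTne : T.Nonempty := ⟨i₁, by simp [hT, hmui₁]⟩
      obtain ⟨i₀, hi₀T, hmin⟩ := T.exists_min_image (fun i => lam i / mu i) hTne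
      have hmui₀ : 0 < mu i₀ := by simpa [hT] using hi₀T
      set t : ℝ := lam i₀ / mu i₀ with ht
      have htnn : 0 ≤ t := div_nonneg (hlam i₀) hmui₀.le
      set lam' : Fin k → ℝ := fun i => lam i - t * mu i with hlam'
      have hlam'nn : ∀ i, 0 ≤ lam' i := by
        intro i
        rcases le_or_gt (mu i) 0 with h | h
        · have : 0 ≤ -(t * mu i) := by
            rw [neg_nonneg]
            exact mul_nonpos_of_nonneg_of_nonpos htnn h
          simp only [hlam']
          linarith [hlam i]
        · have hiT : i ∈ T := by simp [hT, h]
          have hmin' := hmin i hiT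
          have hmul : t * mu i ≤ lam i := by
            calc t * mu i ≤ lam i / mu i * mu i :=
                  mul_le_mul_of_nonneg_right hmin' h.le
              _ = lam i := div_mul_cancel₀ _ (ne_of_gt h)
          simp only [hlam']; linarith
      have hlam'i₀ : lam' i₀ = 0 := by
        simp only [hlam', ht]
        field_simp
        ring
      have hsame : ∑ i, lam' i • v i = ∑ i, lam i • v i := by
        simp only [hlam', sub_smul, mul_smul, Finset.sum_sub_distrib]
        rw [← Finset.smul_sum, hmusum, smul_zero, sub_zero]
      have hsubset : Finset.univ.filter (fun i => lam' i ≠ 0) ⊆ supp.erase i₀ := by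
        intro i hi
        simp only [Finset.mem_filter, Finset.mem_univ, true_and] at hi
        rcases eq_or_ne i i₀ with rfl | hne
        · exact absurd hlam'i₀ hi
        · refine Finset.mem_erase.mpr ⟨hne, ?_⟩
          by_contra hns
          have h1 : lam i = 0 := by
            by_contra hc; exact hns (by simp [hsupp, hc])
          have h2 : mu i = 0 := hmusupp i hns
          exact hi (by simp [hlam', h1, h2])
      have hcard' : (Finset.univ.filter (fun i => lam' i ≠ 0)).card ≤ n := by
        have h1 := Finset.card_le_card hsubset
        have h2 : (supp.erase i₀).card < supp.card := by
          apply Finset.card_erase_lt_of_mem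
          by_contra hns
          exact absurd (hmusupp i₀ hns) (ne_of_gt hmui₀)
        omega
      obtain ⟨s, hs, lam'', h1, h2, h3⟩ := ih lam' hlam'nn hcard'
      exact ⟨s, hs, lam'', h1, h2, h3.trans hsame⟩

/-- the finitely generated cone is closed -/
lemma cone_isClosed {k : ℕ} (v : Fin k → (Fin d → ℝ)) :
    IsClosed {y : Fin d → ℝ | ∃ lam : Fin k → ℝ, (∀ i, 0 ≤ lam i) ∧ ∑ i, lam i • v i = y} := by
  classical
  have hrw : {y : Fin d → ℝ | ∃ lam : Fin k → ℝ, (∀ i, 0 ≤ lam i) ∧ ∑ i, lam i • v i = y}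
      = ⋃ (s : Finset (Fin k)) (_ : LinearIndependent ℝ (fun i : s => v i)),
          (fun mu : s → ℝ => ∑ i : s, mu i • v i) '' {mu | ∀ i, 0 ≤ mu i} := by
    ext y
    simp only [Set.mem_setOf_eq, Set.mem_iUnion, Set.mem_image]
    constructor
    · rintro ⟨lam, hlam, rfl⟩
      obtain ⟨s, hs, lam', h1, h2, h3⟩ :=
        conic_caratheodory v (Finset.univ.filter (fun i => lam i ≠ 0)).card lam hlam le_rfl
      refine ⟨s, hs, fun i => lam' i, fun i => h1 i, ?_⟩
      rw [← h3]
      rw [← Finset.sum_subset (Finset.subset_univ s) (fun i _ hi => by rw [h2 i hi, zero_smul])]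
      rw [← Finset.sum_attach s (fun i => lam' i • v i), Finset.univ_eq_attach]
    · rintro ⟨s, hs, mu, hmu, rfl⟩
      refine ⟨fun i => if h : i ∈ s then mu ⟨i, h⟩ else 0, fun i => ?_, ?_⟩
      · by_cases h : i ∈ s
        · simpa [h] using hmu ⟨i, h⟩
        · simp [h]
      · rw [← Finset.sum_subset (Finset.subset_univ s)
          (fun i _ hi => by simp [hi])]
        rw [← Finset.sum_attach s fun i => (if h : i ∈ s then mu ⟨i, h⟩ else 0) • v i]
        apply Finset.sum_congr rfl
        intro i _
        simp [i.2]
  rw [hrw]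
  apply isClosed_iUnion_of_finite
  intro s
  apply isClosed_iUnion_of_finite
  intro hs
  -- image of the nonneg orthant under an injective linear map
  set L : (s → ℝ) →ₗ[ℝ] (Fin d → ℝ) :=
    { toFun := fun mu => ∑ i : s, mu i • v i
      map_add' := by
        intro x y
        simp only [Pi.add_apply, add_smul, Finset.sum_add_distrib]
      map_smul' := by
        intro c x
        simp only [Pi.smul_apply, smul_eq_mul, RingHom.id_apply, Finset.smul_sum,
          mul_smul] } with hL
  have hker : LinearMap.ker L = ⊥ := by
    rw [LinearMap.ker_eq_bot']
    intro m hm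
    rw [Fintype.linearIndependent_iff] at hs
    funext i
    exact hs m hm i
  have hemb := LinearMap.isClosedEmbedding_of_injective hker
  have hclosed : IsClosed {mu : s → ℝ | ∀ i, 0 ≤ mu i} := by
    have : {mu : s → ℝ | ∀ i, 0 ≤ mu i} = ⋂ i, {mu | 0 ≤ mu i} := by
      ext; simp [Set.mem_iInter]
    rw [this]
    exact isClosed_iInter (fun i => isClosed_le continuous_const (continuous_apply i))
  exact hemb.isClosedMap _ hclosed

/-- Farkas-type lemma: if the polyhedron `{x | A x ≤ a}` is nonempty and bounded,
every vector is a nonnegative combination of the rows of `A`. -/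
lemma farkas {k : ℕ} (A : Fin k → Fin d → ℝ) (a : Fin k → ℝ)
    (x₀ : Fin d → ℝ) (hx₀ : ∀ i, A i ⬝ᵥ x₀ ≤ a i)
    (hbd : Bornology.IsBounded {x : Fin d → ℝ | ∀ i, A i ⬝ᵥ x ≤ a i})
    (c : Fin d → ℝ) :
    ∃ lam : Fin k → ℝ, (∀ i, 0 ≤ lam i) ∧ ∑ i, lam i • A i = c := by
  classical
  by_contra hcon
  push_neg at hcon
  set CC : Set (Fin d → ℝ) :=
    {y | ∃ lam : Fin k → ℝ, (∀ i, 0 ≤ lam i) ∧ ∑ i, lam i • A i = y} with hCC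
  have hcmem : c ∉ CC := by
    rintro ⟨lam, h1, h2⟩
    exact hcon lam h1 h2
  have hconv : Convex ℝ CC := by
    rintro y1 ⟨l1, hl1, rfl⟩ y2 ⟨l2, hl2, rfl⟩ p q hp hq hpq
    refine ⟨fun i => p * l1 i + q * l2 i,
      fun i => add_nonneg (mul_nonneg hp (hl1 i)) (mul_nonneg hq (hl2 i)), ?_⟩
    simp only [add_smul, mul_smul, Finset.sum_add_distrib, ← Finset.smul_sum]
  obtain ⟨f, u, hfs, hfc⟩ := geometric_hahn_banach_closed_point hconv (cone_isClosed A) hcmem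
  have h0CC : (0 : Fin d → ℝ) ∈ CC := ⟨0, fun i => le_refl 0, by simp⟩
  have hu0 : 0 < u := by simpa using hfs 0 h0CC
  have hfnonpos : ∀ y ∈ CC, f y ≤ 0 := by
    intro y hy
    by_contra hpos
    push_neg at hpos
    obtain ⟨lam, hlam, hsum⟩ := hy
    have hscale : ((u + 1) / f y) • y ∈ CC := by
      refine ⟨fun i => (u + 1) / f y * lam i,
        fun i => mul_nonneg (div_nonneg (by linarith) hpos.le) (hlam i), ?_⟩
      simp only [mul_smul, ← Finset.smul_sum, hsum]
    have := hfs _ hscale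
    rw [_root_.map_smul] at this
    simp only [smul_eq_mul] at this
    rw [div_mul_cancel₀ _ (ne_of_gt hpos)] at this
    linarith
  -- the separating direction
  set y : Fin d → ℝ := fun j => f (Pi.single j 1) with hy
  have hfy : ∀ w : Fin d → ℝ, w ⬝ᵥ y = f w := by
    intro w
    have hw : w = ∑ j, w j • (Pi.single j 1 : Fin d → ℝ) := by
      funext j'
      rw [Finset.sum_apply]
      simp [Pi.single_apply, Finset.sum_ite_eq']
    calc w ⬝ᵥ y = ∑ j, w j * f (Pi.single j 1) := rfl
      _ = f (∑ j, w j • (Pi.single j 1 : Fin d → ℝ)) := by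
          rw [map_sum]
          apply Finset.sum_congr rfl
          intro j _
          rw [_root_.map_smul, smul_eq_mul]
      _ = f w := by rw [← hw]
  have hAy : ∀ i, A i ⬝ᵥ y ≤ 0 := by
    intro i
    rw [hfy]
    apply hfnonpos
    refine ⟨fun i' => if i' = i then 1 else 0, fun i' => by positivity, ?_⟩
    simp [Finset.sum_ite_eq']
  have hcy : 0 < c ⬝ᵥ y := by rw [hfy]; linarith [hfc]
  have hyne : y ≠ 0 := by
    intro h
    rw [h] at hcy
    simp at hcy
  -- unboundedness contradiction
  obtain ⟨R, hR⟩ := isBounded_iff_forall_norm_le.mp hbd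
  obtain ⟨j, hj⟩ := Function.ne_iff.mp hyne
  have hyj : (0:ℝ) < |y j| := abs_pos.mpr hj
  set t : ℝ := (R + |x₀ j| + 1) / |y j| with htdef
  have hRnn : 0 ≤ R := le_trans (norm_nonneg x₀) (hR x₀ hx₀)
  have htnn : 0 ≤ t := by positivity
  have hmem : (x₀ + t • y) ∈ {x : Fin d → ℝ | ∀ i, A i ⬝ᵥ x ≤ a i} := by
    intro i
    rw [dotProduct_add, dotProduct_smul, smul_eq_mul]
    have h3 : t * (A i ⬝ᵥ y) ≤ 0 := mul_nonpos_of_nonneg_of_nonpos htnn (hAy i)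
    linarith [hx₀ i]
  have hnorm := hR _ hmem
  have habs : |(x₀ + t • y) j| ≤ ‖x₀ + t • y‖ := by
    rw [← Real.norm_eq_abs]; exact norm_le_pi_norm _ j
  have hval : (x₀ + t • y) j = x₀ j + t * y j := by simp
  have hlow : t * |y j| - |x₀ j| ≤ |(x₀ + t • y) j| := by
    rw [hval]
    have h1 : |t * y j| - |x₀ j| ≤ |x₀ j + t * y j| := by
      have := abs_add_le (x₀ j) (t * y j)
      have h2 := abs_sub_abs_le_abs_sub (t * y j) (-(x₀ j))
      calc |t * y j| - |x₀ j| ≤ |t * y j + x₀ j| := by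
            have := abs_add_le (t * y j + x₀ j) (-(x₀ j))
            simp only [add_neg_cancel_right] at this
            rw [abs_neg] at this
            linarith
        _ = |x₀ j + t * y j| := by rw [add_comm]
    rw [abs_mul, abs_of_nonneg htnn] at h1
    exact h1
  have ht2 : t * |y j| = R + |x₀ j| + 1 := div_mul_cancel₀ _ (ne_of_gt hyj)
  rw [ht2] at hlow
  linarith

end Cert2
namespace Cert3
variable {d l : ℕ}

lemma halfspace_bound {b : Fin l → Fin d → ℝ} {z : Fin d → ℝ}
    (hz : ∀ j, b j ⬝ᵥ z ≤ 1) :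
    ∀ q ∈ convexHull ℝ (Set.range b), q ⬝ᵥ z ≤ 1 := by
  intro q hq
  have hlin : IsLinearMap ℝ (fun y : Fin d → ℝ => y ⬝ᵥ z) :=
    ⟨fun u v => add_dotProduct u v z, fun c u => smul_dotProduct c u z⟩
  have : convexHull ℝ (Set.range b) ⊆ {y : Fin d → ℝ | y ⬝ᵥ z ≤ 1} :=
    convexHull_min (by rintro y ⟨j, rfl⟩; exact hz j) (convex_halfSpace_le hlin 1)
  exact this hq

lemma polar_bounded {b : Fin l → Fin d → ℝ} {Q : Set (Fin d → ℝ)}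
    (hQdef : Q = convexHull ℝ (Set.range b))
    (hQ0 : (0 : Fin d → ℝ) ∈ interior Q) :
    Bornology.IsBounded {z : Fin d → ℝ | ∀ j, b j ⬝ᵥ z ≤ 1} := by
  obtain ⟨ε, hε, hball⟩ : ∃ ε > 0, Metric.ball (0 : Fin d → ℝ) ε ⊆ Q := by
    have := mem_interior_iff_mem_nhds.mp hQ0
    rcases Metric.mem_nhds_iff.mp this with ⟨ε, hε, hb⟩
    exact ⟨ε, hε, hb⟩
  apply (Metric.isBounded_closedBall (x := (0 : Fin d → ℝ)) (r := 2/ε)).subset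
  intro z hz
  rw [Metric.mem_closedBall, dist_zero_right]
  apply pi_norm_le_iff_of_nonneg (by positivity) |>.mpr
  intro i
  have key : ∀ s : ℝ, |s| ≤ ε/2 → s * z i ≤ 1 := by
    intro s hs
    have hu : (s • (Pi.single i 1 : Fin d → ℝ)) ∈ Metric.ball (0 : Fin d → ℝ) ε := by
      rw [Metric.mem_ball, dist_zero_right]
      have : ‖s • (Pi.single i 1 : Fin d → ℝ)‖ ≤ ε/2 := by
        apply pi_norm_le_iff_of_nonneg (by positivity) |>.mpr
        intro j
        rcases eq_or_ne j i with rfl | hne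
        · simpa using hs
        · simp only [Pi.smul_apply, Pi.single_apply, if_neg hne, smul_eq_mul, mul_zero,
            norm_zero]
          positivity
      linarith
    have hmem : (s • (Pi.single i 1 : Fin d → ℝ)) ∈ convexHull ℝ (Set.range b) := by
      rw [← hQdef]; exact hball hu
    have := halfspace_bound (fun j => hz j) _ hmem
    rwa [smul_dotProduct, smul_eq_mul, single_dotProduct, one_mul] at this
  have h1 := key (ε/2) (by rw [abs_of_pos (by positivity)])
  have h2 := key (-(ε/2)) (by rw [abs_neg, abs_of_pos (by positivity)])
  have hinv : 2/ε * (ε/2) = 1 := by field_simp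
  rw [Real.norm_eq_abs, abs_le]
  constructor
  · have := mul_le_mul_of_nonneg_left h2 (by positivity : (0:ℝ) ≤ 2/ε)
    rw [show 2/ε * (-(ε/2) * z i) = -(2/ε * (ε/2)) * z i by ring, hinv] at this
    linarith
  · have := mul_le_mul_of_nonneg_left h1 (by positivity : (0:ℝ) ≤ 2/ε)
    rw [show 2/ε * (ε/2 * z i) = (2/ε * (ε/2)) * z i by ring, hinv] at this
    linarith

lemma subset_interior_of_frontier {P Q : Set (Fin d → ℝ)}
    (hPQ : P ⊆ Q) (hbd : frontier P ∩ frontier Q = ∅) : P ⊆ interior Q := by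
  intro x hx
  by_contra hni
  have hfQ : x ∈ frontier Q := ⟨subset_closure (hPQ hx), hni⟩
  have hfP : x ∈ frontier P := by
    refine ⟨subset_closure hx, fun hint => hni (interior_mono hPQ hint)⟩
  exact Set.eq_empty_iff_forall_notMem.mp hbd x ⟨hfP, hfQ⟩

lemma rho_bound {b : Fin l → Fin d → ℝ} {P Q : Set (Fin d → ℝ)}
    (hQdef : Q = convexHull ℝ (Set.range b))
    (hQ0 : (0 : Fin d → ℝ) ∈ interior Q)
    (hPc : IsCompact P) (hPsub : P ⊆ interior Q) :
    ∃ ρ : ℝ, ρ < 1 ∧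
      ∀ x ∈ P, ∀ z : Fin d → ℝ, (∀ j, b j ⬝ᵥ z ≤ 1) → x ⬝ᵥ z ≤ ρ := by
  classical
  set U : {e : ℝ // 0 < e} → Set (Fin d → ℝ) :=
    fun e => (fun x => (1 + e.1) • x) ⁻¹' (interior Q) with hU
  have hUopen : ∀ e, IsOpen (U e) :=
    fun e => isOpen_interior.preimage (continuous_const_smul _)
  have hcover : P ⊆ ⋃ e, U e := by
    intro x hx
    have hxint : x ∈ interior Q := hPsub hx
    have hT : Filter.Tendsto (fun t : ℝ => t • x) (nhds 1) (nhds x) := by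
      have := (continuous_id.smul (continuous_const : Continuous fun _ : ℝ => x)).tendsto (1:ℝ)
      convert this using 2
      exacts [rfl, (one_smul ℝ x).symm]
    have hev : ∀ᶠ t : ℝ in nhds 1, t • x ∈ interior Q :=
      hT.eventually (Filter.eventually_of_mem (isOpen_interior.mem_nhds hxint) (fun y hy => hy))
    obtain ⟨t, ht1, htmem⟩ := hev.exists_gt
    refine Set.mem_iUnion.mpr ⟨⟨t - 1, by linarith⟩, ?_⟩
    show (1 + (t - 1)) • x ∈ interior Q
    simpa [show 1 + (t - 1) = t by ring] using htmem
  obtain ⟨tF, htF⟩ := hPc.elim_finite_subcover U hUopen hcover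
  rcases tF.eq_empty_or_nonempty with rfl | hne
  · refine ⟨0, by norm_num, fun x hx => ?_⟩
    exfalso
    have := htF hx
    simpa using this
  · obtain ⟨e₀, he₀F, hmin⟩ := tF.exists_min_image (fun e => (e : {e : ℝ // 0 < e}).1) hne
    set εm : ℝ := e₀.1 with hεm
    have hεmpos : 0 < εm := e₀.2
    have hPQ' : ∀ x ∈ P, (1 + εm) • x ∈ Q := by
      intro x hx
      obtain ⟨e, heF, hxe⟩ : ∃ e ∈ tF, x ∈ U e := by
        have := htF hx
        simpa using this
      have h1 : (1 + e.1) • x ∈ Q := interior_subset hxe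
      have hle : εm ≤ e.1 := hmin e heF
      have h0Q : (0 : Fin d → ℝ) ∈ Q := interior_subset hQ0
      have hQconv : Convex ℝ Q := hQdef ▸ convex_convexHull ℝ _
      set θ : ℝ := (1 + εm) / (1 + e.1) with hθ
      have hθ0 : 0 ≤ θ := by
        rw [hθ]
        apply div_nonneg (by linarith) (by linarith [e.2])
      have hθ1 : θ ≤ 1 := by
        rw [hθ, div_le_one (by linarith [e.2])]
        linarith
      have := hQconv h1 h0Q hθ0 (by linarith : (0:ℝ) ≤ 1 - θ) (by ring)
      rw [smul_zero, add_zero, smul_smul] at this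
      rwa [show θ * (1 + e.1) = 1 + εm by
        rw [hθ]; exact div_mul_cancel₀ _ (by linarith [e.2])] at this
    refine ⟨1 / (1 + εm), by rw [div_lt_one (by linarith)]; linarith, ?_⟩
    intro x hx z hz
    have hq := halfspace_bound hz _ (hQdef ▸ hPQ' x hx)
    rw [smul_dotProduct, smul_eq_mul] at hq
    rw [le_div_iff₀ (by linarith : (0:ℝ) < 1 + εm)]
    linarith

end Cert3
end
end Auxiliary


open Matrix MvPolynomial

/-- Sum of squares in ℝ[x,z] (variables indexed by `Fin d ⊕ Fin d`). -/
def IsSOS {d : ℕ} (p : MvPolynomial (Fin d ⊕ Fin d) ℝ) : Prop :=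
  ∃ (n : ℕ) (h : Fin n → MvPolynomial (Fin d ⊕ Fin d) ℝ), p = ∑ i, h i ^ 2

/-- if P is strongly contained in Q (P ⊆ Q and the boundaries are
disjoint), then some μ < 1 admits an sos representation of μ - xᵀz in the
quadratic module generated by the linear constraints of P × Q°; hence the
hierarchy certifies containment in finitely many steps. -/
theorem strong_containment_finite_certificate
    {d k l : ℕ} (a : Fin k → ℝ) (A : Fin k → Fin d → ℝ) (b : Fin l → Fin d → ℝ)
    (P : Set (Fin d → ℝ)) (hPdef : P = {x | ∀ i, 0 ≤ a i - A i ⬝ᵥ x})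
    (hPne : P.Nonempty) (hPbd : Bornology.IsBounded P)
    (Q : Set (Fin d → ℝ)) (hQdef : Q = convexHull ℝ (Set.range b))
    (hQ0 : (0 : Fin d → ℝ) ∈ interior Q)
    (hPQ : P ⊆ Q) (hbd : frontier P ∩ frontier Q = ∅) :
    ∃ μ : ℝ, μ < 1 ∧
      ∃ (σ₀ : MvPolynomial (Fin d ⊕ Fin d) ℝ)
        (σ : Fin k → MvPolynomial (Fin d ⊕ Fin d) ℝ)
        (τ : Fin l → MvPolynomial (Fin d ⊕ Fin d) ℝ),
        IsSOS σ₀ ∧ (∀ i, IsSOS (σ i)) ∧ (∀ j, IsSOS (τ j)) ∧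
        C μ - ∑ i : Fin d, X (Sum.inl i) * X (Sum.inr i) =
          σ₀ + ∑ i : Fin k, σ i * (C (a i) - ∑ j : Fin d, C (A i j) * X (Sum.inl j))
             + ∑ j : Fin l, τ j * (1 - ∑ i : Fin d, C (b j i) * X (Sum.inr i)) := by
  classical
  -- geometry: P is compact and contained in the interior of Q
  have hPclosed : IsClosed P := by
    rw [hPdef]
    have hrw : {x : Fin d → ℝ | ∀ i, 0 ≤ a i - A i ⬝ᵥ x}
        = ⋂ i, {x : Fin d → ℝ | 0 ≤ a i - A i ⬝ᵥ x} := by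
      ext x; simp [Set.mem_iInter]
    rw [hrw]
    refine isClosed_iInter (fun i => isClosed_le continuous_const ?_)
    have : (fun x : Fin d → ℝ => a i - A i ⬝ᵥ x)
        = fun x : Fin d → ℝ => a i - ∑ j, A i j * x j := rfl
    rw [this]
    exact continuous_const.sub
      (continuous_finset_sum _ (fun j _ => continuous_const.mul (continuous_apply j)))
  have hPcomp : IsCompact P := Metric.isCompact_iff_isClosed_bounded.mpr ⟨hPclosed, hPbd⟩
  have hPint : P ⊆ interior Q := Cert3.subset_interior_of_frontier hPQ hbd
  obtain ⟨ρ, hρ1, hρ⟩ := Cert3.rho_bound hQdef hQ0 hPcomp hPint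
  set μ : ℝ := (1 + ρ)/2 with hμ
  -- the quadratic module
  set G : Fin k ⊕ Fin l → MvPolynomial (Fin d ⊕ Fin d) ℝ := Sum.elim
    (fun i => C (a i) - ∑ j : Fin d, C (A i j) * X (Sum.inl j))
    (fun j => (1 : MvPolynomial (Fin d ⊕ Fin d) ℝ)
      - ∑ i : Fin d, C (b j i) * X (Sum.inr i)) with hGdef
  set M : Set (MvPolynomial (Fin d ⊕ Fin d) ℝ) :=
    {p | ∃ σ₀, Cert.Sos σ₀ ∧ ∃ σ : Fin k ⊕ Fin l → MvPolynomial (Fin d ⊕ Fin d) ℝ,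
      (∀ e, Cert.Sos (σ e)) ∧ p = σ₀ + ∑ e, σ e * G e} with hMdef
  have hqm : Cert.IsQM M := Cert.isQM_gen G
  have hGmem : ∀ e, G e ∈ M := fun e => Cert.gen_mem G e
  -- Farkas certificates for the x-variables
  obtain ⟨x₀, hx₀⟩ := hPne
  have hx₀' : ∀ i, A i ⬝ᵥ x₀ ≤ a i := by
    rw [hPdef] at hx₀
    intro i
    have := hx₀ i
    linarith
  have hPbd' : Bornology.IsBounded {x : Fin d → ℝ | ∀ i, A i ⬝ᵥ x ≤ a i} := by
    have hsetP : {x : Fin d → ℝ | ∀ i, A i ⬝ᵥ x ≤ a i} = P := by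
      rw [hPdef]; ext x; simp [sub_nonneg]
    rwa [hsetP]
  have hxcert : ∀ c : Fin d → ℝ,
      ∃ r : ℝ, (C r - ∑ j : Fin d, C (c j) * X (Sum.inl j)
        : MvPolynomial (Fin d ⊕ Fin d) ℝ) ∈ M := by
    intro c
    obtain ⟨lam, hlam0, hlamsum⟩ := Cert2.farkas A a x₀ hx₀' hPbd' c
    refine ⟨∑ i, lam i * a i, ?_⟩
    rw [← Cert.lin_rep (Sum.inl : Fin d → Fin d ⊕ Fin d) a A lam c hlamsum]
    exact hqm.sum_mem (fun i _ => hqm.const_mul_mem (hlam0 i) (hGmem (Sum.inl i)))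
  -- Farkas certificates for the z-variables
  have hZbd : Bornology.IsBounded {z : Fin d → ℝ | ∀ j, b j ⬝ᵥ z ≤ (fun _ => (1:ℝ)) j} :=
    Cert3.polar_bounded hQdef hQ0
  have hzcert : ∀ c : Fin d → ℝ,
      ∃ r : ℝ, (C r - ∑ i : Fin d, C (c i) * X (Sum.inr i)
        : MvPolynomial (Fin d ⊕ Fin d) ℝ) ∈ M := by
    intro c
    obtain ⟨lam, hlam0, hlamsum⟩ := Cert2.farkas b (fun _ => (1:ℝ)) 0
      (fun j => by simp) hZbd c
    refine ⟨∑ j, lam j * 1, ?_⟩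
    rw [← Cert.lin_rep (Sum.inr : Fin d → Fin d ⊕ Fin d) (fun _ => (1:ℝ)) b lam c hlamsum]
    refine hqm.sum_mem (fun j _ => ?_)
    have := hqm.const_mul_mem (hlam0 j) (hGmem (Sum.inr j))
    simpa only [hGdef, Sum.elim_inr, _root_.map_one] using this
  -- per-variable bounds
  have hvar : ∀ u : Fin d ⊕ Fin d, ∃ cw : ℝ, 0 < cw ∧
      (C cw - X u : MvPolynomial (Fin d ⊕ Fin d) ℝ) ∈ M ∧
      (C cw + X u : MvPolynomial (Fin d ⊕ Fin d) ℝ) ∈ M := by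
    have combine : ∀ (u : Fin d ⊕ Fin d) (r1 r2 : ℝ),
        (C r1 - X u : MvPolynomial (Fin d ⊕ Fin d) ℝ) ∈ M →
        (C r2 + X u : MvPolynomial (Fin d ⊕ Fin d) ℝ) ∈ M →
        ∃ cw : ℝ, 0 < cw ∧
          (C cw - X u : MvPolynomial (Fin d ⊕ Fin d) ℝ) ∈ M ∧
          (C cw + X u : MvPolynomial (Fin d ⊕ Fin d) ℝ) ∈ M := by
      intro u r1 r2 h1 h2
      refine ⟨max (max r1 r2) 0 + 1, by positivity, ?_, ?_⟩
      · have he : (C (max (max r1 r2) 0 + 1) - X u : MvPolynomial (Fin d ⊕ Fin d) ℝ)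
            = C (max (max r1 r2) 0 + 1 - r1) + (C r1 - X u) := by
          simp only [map_add, map_sub]; ring
        rw [he]
        refine hqm.add (hqm.const_mem ?_) h1
        have := le_max_left r1 r2
        have := le_max_left (max r1 r2) 0
        linarith
      · have he : (C (max (max r1 r2) 0 + 1) + X u : MvPolynomial (Fin d ⊕ Fin d) ℝ)
            = C (max (max r1 r2) 0 + 1 - r2) + (C r2 + X u) := by
          simp only [map_add, map_sub]; ring
        rw [he]
        refine hqm.add (hqm.const_mem ?_) h2
        have := le_max_right r1 r2
        have := le_max_left (max r1 r2) 0
        linarith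
    intro u
    rcases u with j | i
    · obtain ⟨r1, h1⟩ := hxcert (Pi.single j 1)
      obtain ⟨r2, h2⟩ := hxcert (-(Pi.single j 1))
      rw [Cert.single_collapse (Sum.inl : Fin d → Fin d ⊕ Fin d) j] at h1
      rw [Cert.neg_single_collapse (Sum.inl : Fin d → Fin d ⊕ Fin d) j,
        sub_neg_eq_add] at h2
      exact combine _ r1 r2 h1 h2
    · obtain ⟨r1, h1⟩ := hzcert (Pi.single i 1)
      obtain ⟨r2, h2⟩ := hzcert (-(Pi.single i 1))
      rw [Cert.single_collapse (Sum.inr : Fin d → Fin d ⊕ Fin d) i] at h1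
      rw [Cert.neg_single_collapse (Sum.inr : Fin d → Fin d ⊕ Fin d) i,
        sub_neg_eq_add] at h2
      exact combine _ r1 r2 h1 h2
  choose cc hccpos hccm hccp using hvar
  -- the ball certificate
  have hball : (C (∑ u : Fin d ⊕ Fin d, cc u ^ 2)
      - ∑ u : Fin d ⊕ Fin d, X u ^ 2 : MvPolynomial (Fin d ⊕ Fin d) ℝ) ∈ M := by
    have he : (C (∑ u : Fin d ⊕ Fin d, cc u ^ 2)
        - ∑ u : Fin d ⊕ Fin d, X u ^ 2 : MvPolynomial (Fin d ⊕ Fin d) ℝ)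
        = ∑ u : Fin d ⊕ Fin d, (C (cc u ^ 2) - X u ^ 2) := by
      rw [Finset.sum_sub_distrib]
      congr 1
      rw [map_sum]
    rw [he]
    exact hqm.sum_mem (fun u _ => hqm.sq_sub_sq_mem (hccpos u) (hccm u) (hccp u))
  -- positivity of μ - x⬝z on the feasible set
  set f : MvPolynomial (Fin d ⊕ Fin d) ℝ :=
    C μ - ∑ i : Fin d, X (Sum.inl i) * X (Sum.inr i) with hfdef
  have hf : ∀ w : (Fin d ⊕ Fin d) → ℝ,
      (∀ m ∈ M, 0 ≤ aeval w m) → 0 < aeval w f := by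
    intro w hw
    set x : Fin d → ℝ := fun j => w (Sum.inl j) with hx
    set z : Fin d → ℝ := fun i => w (Sum.inr i) with hz
    have hGx : ∀ i, aeval w (G (Sum.inl i)) = a i - A i ⬝ᵥ x := by
      intro i
      simp only [hGdef, Sum.elim_inl, map_sub, map_sum, _root_.map_mul, aeval_C, aeval_X,
        Algebra.algebraMap_self_apply, dotProduct, hx]
    have hGz : ∀ j, aeval w (G (Sum.inr j)) = 1 - b j ⬝ᵥ z := by
      intro j
      simp only [hGdef, Sum.elim_inr, map_sub, map_sum, _root_.map_mul, _root_.map_one,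
        aeval_C, aeval_X, Algebra.algebraMap_self_apply, dotProduct, hz]
    have hxP : x ∈ P := by
      rw [hPdef]
      intro i
      have := hw _ (hGmem (Sum.inl i))
      rwa [hGx i] at this
    have hzQ : ∀ j, b j ⬝ᵥ z ≤ 1 := by
      intro j
      have := hw _ (hGmem (Sum.inr j))
      rw [hGz j] at this
      linarith
    have hxz := hρ x hxP z hzQ
    have haev : aeval w f = μ - x ⬝ᵥ z := by
      simp only [hfdef, map_sub, map_sum, _root_.map_mul, aeval_C, aeval_X,
        Algebra.algebraMap_self_apply, dotProduct, hx, hz]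
    rw [haev, hμ]
    have : x ⬝ᵥ z ≤ ρ := hxz
    linarith
  -- Putinar's theorem
  have hfM : f ∈ M := Cert.putinar hqm hball hf
  obtain ⟨σ₀, hσ₀, σ, hσ, hfeq⟩ := hfM
  refine ⟨μ, by rw [hμ]; linarith, σ₀, fun i => σ (Sum.inl i), fun j => σ (Sum.inr j),
    Cert.sos_fin_rep hσ₀, fun i => Cert.sos_fin_rep (hσ (Sum.inl i)),
    fun j => Cert.sos_fin_rep (hσ (Sum.inr j)), ?_⟩
  rw [hfdef] at hfeq
  rw [Fintype.sum_sum_type] at hfeq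
  simp only [hGdef, Sum.elim_inl, Sum.elim_inr] at hfeq
  linear_combination hfeq
end

section
/- Scaled containment: Let P be an H-polytope and Q a V-polytope in R^d, both with 0 in their interiors. Then there exists λ > 0 such that λP ⊆ S ⊆ (1/√d)·Q for some box S = Π_i [-λ_i, λ_i], and consequently the containment λP ⊆ Q is certified in the initial relaxation step t = 2 of the sos hierarchy. -/
open Matrix MvPolynomial Pointwise

namespace SOSAux

variable {d : ℕ}

lemma isSOS_zero : IsSOS (0 : MvPolynomial (Fin d ⊕ Fin d) ℝ) :=
  ⟨0, fun i => i.elim0, by simp⟩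

lemma isSOS_add {p q : MvPolynomial (Fin d ⊕ Fin d) ℝ} (hp : IsSOS p) (hq : IsSOS q) :
    IsSOS (p + q) := by
  obtain ⟨n, f, rfl⟩ := hp
  obtain ⟨m, g, rfl⟩ := hq
  refine ⟨n + m, Fin.append f g, ?_⟩
  rw [Fin.sum_univ_add]
  congr 1 <;> refine Finset.sum_congr rfl fun i _ => ?_ <;>
    simp [Fin.append_left, Fin.append_right]

lemma isSOS_sum {ι : Type*} (s : Finset ι) (f : ι → MvPolynomial (Fin d ⊕ Fin d) ℝ)
    (h : ∀ i ∈ s, IsSOS (f i)) : IsSOS (∑ i ∈ s, f i) :=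
  Finset.sum_induction f IsSOS (fun _ _ => isSOS_add) isSOS_zero h

lemma isSOS_C {r : ℝ} (hr : 0 ≤ r) : IsSOS (C r : MvPolynomial (Fin d ⊕ Fin d) ℝ) :=
  ⟨1, fun _ => C (Real.sqrt r), by rw [Fin.sum_univ_one, ← map_pow, Real.sq_sqrt hr]⟩

lemma isSOS_C_mul_sq {r : ℝ} (hr : 0 ≤ r) (p : MvPolynomial (Fin d ⊕ Fin d) ℝ) :
    IsSOS (C r * p ^ 2) :=
  ⟨1, fun _ => C (Real.sqrt r) * p, by
    rw [Fin.sum_univ_one, mul_pow, ← map_pow, Real.sq_sqrt hr]⟩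

lemma deg_sum_le {ι : Type*} (s : Finset ι) (f : ι → MvPolynomial (Fin d ⊕ Fin d) ℝ) (n : ℕ)
    (h : ∀ i ∈ s, (f i).totalDegree ≤ n) : (∑ i ∈ s, f i).totalDegree ≤ n := by
  classical
  induction s using Finset.induction with
  | empty => simp
  | insert a t hx ih =>
    rw [Finset.sum_insert hx]
    exact le_trans (totalDegree_add _ _)
      (max_le (h a (Finset.mem_insert_self a t)) (ih fun i hi => h i (Finset.mem_insert_of_mem hi)))

lemma deg_linp (r s : ℝ) (v : Fin d ⊕ Fin d) :
    ((X v + C s : MvPolynomial (Fin d ⊕ Fin d) ℝ)).totalDegree ≤ 1 :=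
  le_trans (totalDegree_add _ _) (by simp [totalDegree_X])

lemma deg_linm (r s : ℝ) (v : Fin d ⊕ Fin d) :
    ((X v - C s : MvPolynomial (Fin d ⊕ Fin d) ℝ)).totalDegree ≤ 1 := by
  rw [sub_eq_add_neg, ← C_neg]
  exact deg_linp r (-s) v

lemma deg_C_mul_sq_le (r : ℝ) {p : MvPolynomial (Fin d ⊕ Fin d) ℝ} (hp : p.totalDegree ≤ 1) :
    (C r * p ^ 2).totalDegree ≤ 2 := by
  refine le_trans (totalDegree_mul _ _) ?_
  have h2 : (p ^ 2).totalDegree ≤ 2 := le_trans (totalDegree_pow _ _) (by omega)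
  simp [totalDegree_C]
  omega

end SOSAux

namespace SOSAux

lemma sum_mul_sub {k d : ℕ} (u r : Fin k → ℝ) (M : Fin k → Fin d → ℝ) (ξ : Fin d → ℝ) :
    ∑ m, u m * (r m - ∑ i', M m i' * ξ i')
      = ∑ m, u m * r m - ∑ i', (∑ m, u m * M m i') * ξ i' := by
  simp only [mul_sub, Finset.sum_sub_distrib, Finset.mul_sum]
  congr 1
  rw [Finset.sum_comm]
  refine Finset.sum_congr rfl fun i' _ => ?_
  rw [Finset.sum_mul]
  exact Finset.sum_congr rfl fun m _ => by ring

lemma sum_delta_mul {d : ℕ} (i : Fin d) (ξ : Fin d → ℝ) (r : ℝ) :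
    ∑ i', (if i = i' then r else 0) * ξ i' = r * ξ i := by
  simp [ite_mul]

lemma contract {k d : ℕ} (u a : Fin k → ℝ) (A : Fin k → Fin d → ℝ) (ξ : Fin d → ℝ)
    (lam : ℝ) (i : Fin d) (e : ℝ)
    (Hu : ∀ i', ∑ m, u m * A m i' = if i = i' then e else 0) :
    ∑ m, u m * (lam * a m - ∑ i', A m i' * ξ i')
      = lam * (∑ m, u m * a m) - e * ξ i := by
  have h := sum_mul_sub u (fun m => lam * a m) A ξ
  rw [h]
  simp only [Hu]
  rw [sum_delta_mul, Finset.mul_sum]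
  congr 1
  exact Finset.sum_congr rfl fun m _ => by ring

lemma contract1 {l d : ℕ} (w : Fin l → ℝ) (b : Fin l → Fin d → ℝ) (ζ : Fin d → ℝ)
    (i : Fin d) (e : ℝ)
    (Hw : ∀ i', ∑ j, w j * b j i' = if i = i' then e else 0) :
    ∑ j, w j * (1 - ∑ i', b j i' * ζ i') = (∑ j, w j) - e * ζ i := by
  have h := sum_mul_sub w (fun _ => 1) b ζ
  simp only [mul_one] at h
  rw [h]
  simp only [Hw]
  rw [sum_delta_mul]

lemma cert_eval {d k l : ℕ} (c lam : ℝ) (hc : c ≠ 0)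
    (a : Fin k → ℝ) (A : Fin k → Fin d → ℝ) (b : Fin l → Fin d → ℝ)
    (u v : Fin d → Fin k → ℝ) (w w' : Fin d → Fin l → ℝ)
    (W W' U V βp βn γ : Fin d → ℝ) (κ : ℝ)
    (Hu : ∀ i i', ∑ m, u i m * A m i' = if i = i' then 1 else 0)
    (Hv : ∀ i i', ∑ m, v i m * A m i' = if i = i' then -1 else 0)
    (Hw : ∀ i i', ∑ j, w i j * b j i' = if i = i' then 1 else 0)
    (Hw' : ∀ i i', ∑ j, w' i j * b j i' = if i = i' then -1 else 0)
    (hW : ∀ i, W i = ∑ j, w i j) (hW' : ∀ i, W' i = ∑ j, w' i j)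
    (hU : ∀ i, U i = ∑ m, u i m * a m) (hV : ∀ i, V i = ∑ m, v i m * a m)
    (hβ : ∀ i, βp i - βn i = (W i - W' i) / 2)
    (hγ : ∀ i, γ i = (W i + W' i) / (4 * c))
    (hκ : κ = 1 - (∑ i, (W i + W' i) * c / 2)
      - ∑ i, (βp i * (lam * U i) + βn i * (lam * V i)))
    (ξ ζ : Fin d → ℝ) :
    1 - ∑ i, ξ i * ζ i =
      (κ + ∑ i, (γ i * (c - lam * U i) / (2 * c) * (ξ i + c) ^ 2
               + γ i * (c - lam * V i) / (2 * c) * (ξ i - c) ^ 2))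
      + ∑ m, (∑ i, (γ i * u i m / (2 * c) * (ξ i + c) ^ 2
                  + γ i * v i m / (2 * c) * (ξ i - c) ^ 2
                  + (βp i * u i m + βn i * v i m)))
             * (lam * a m - ∑ i', A m i' * ξ i')
      + ∑ j, (∑ i, (w i j / (4 * c) * (ξ i + c) ^ 2
                  + w' i j / (4 * c) * (ξ i - c) ^ 2))
             * (1 - ∑ i', b j i' * ζ i') := by
  -- swap the sums in the σ- and τ-parts
  have e2 : ∑ m, (∑ i, (γ i * u i m / (2 * c) * (ξ i + c) ^ 2
                  + γ i * v i m / (2 * c) * (ξ i - c) ^ 2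
                  + (βp i * u i m + βn i * v i m)))
             * (lam * a m - ∑ i', A m i' * ξ i')
      = ∑ i, ((γ i * (ξ i + c) ^ 2 / (2 * c) + βp i) * (lam * U i - ξ i)
            + (γ i * (ξ i - c) ^ 2 / (2 * c) + βn i) * (lam * V i + ξ i)) := by
    simp only [Finset.sum_mul]
    rw [Finset.sum_comm]
    refine Finset.sum_congr rfl fun i _ => ?_
    have cu := contract (u i) a A ξ lam i 1 (Hu i)
    have cv := contract (v i) a A ξ lam i (-1) (Hv i)
    calc ∑ m, (γ i * u i m / (2 * c) * (ξ i + c) ^ 2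
                  + γ i * v i m / (2 * c) * (ξ i - c) ^ 2
                  + (βp i * u i m + βn i * v i m)) * (lam * a m - ∑ i', A m i' * ξ i')
        = ∑ m, ((γ i * (ξ i + c) ^ 2 / (2 * c) + βp i)
                  * (u i m * (lam * a m - ∑ i', A m i' * ξ i'))
              + (γ i * (ξ i - c) ^ 2 / (2 * c) + βn i)
                  * (v i m * (lam * a m - ∑ i', A m i' * ξ i'))) :=
          Finset.sum_congr rfl fun m _ => by ring
      _ = (γ i * (ξ i + c) ^ 2 / (2 * c) + βp i)
              * (∑ m, u i m * (lam * a m - ∑ i', A m i' * ξ i'))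
          + (γ i * (ξ i - c) ^ 2 / (2 * c) + βn i)
              * (∑ m, v i m * (lam * a m - ∑ i', A m i' * ξ i')) := by
          rw [Finset.sum_add_distrib, Finset.mul_sum, Finset.mul_sum]
      _ = _ := by rw [cu, cv, ← hU, ← hV]; ring_nf
  have e3 : ∑ j, (∑ i, (w i j / (4 * c) * (ξ i + c) ^ 2
                  + w' i j / (4 * c) * (ξ i - c) ^ 2))
             * (1 - ∑ i', b j i' * ζ i')
      = ∑ i, ((ξ i + c) ^ 2 / (4 * c) * (W i - ζ i)
            + (ξ i - c) ^ 2 / (4 * c) * (W' i + ζ i)) := by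
    simp only [Finset.sum_mul]
    rw [Finset.sum_comm]
    refine Finset.sum_congr rfl fun i _ => ?_
    have cw := contract1 (w i) b ζ i 1 (Hw i)
    have cw' := contract1 (w' i) b ζ i (-1) (Hw' i)
    calc ∑ j, (w i j / (4 * c) * (ξ i + c) ^ 2
                  + w' i j / (4 * c) * (ξ i - c) ^ 2) * (1 - ∑ i', b j i' * ζ i')
        = ∑ j, ((ξ i + c) ^ 2 / (4 * c) * (w i j * (1 - ∑ i', b j i' * ζ i'))
              + (ξ i - c) ^ 2 / (4 * c) * (w' i j * (1 - ∑ i', b j i' * ζ i'))) :=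
          Finset.sum_congr rfl fun j _ => by ring
      _ = (ξ i + c) ^ 2 / (4 * c) * (∑ j, w i j * (1 - ∑ i', b j i' * ζ i'))
          + (ξ i - c) ^ 2 / (4 * c) * (∑ j, w' i j * (1 - ∑ i', b j i' * ζ i')) := by
          rw [Finset.sum_add_distrib, Finset.mul_sum, Finset.mul_sum]
      _ = _ := by rw [cw, cw', ← hW, ← hW']; ring_nf
  rw [e2, e3, hκ]
  have final : ∑ i, (ξ i * ζ i)
      = ∑ i, (((W i + W' i) * c / 2) + (βp i * (lam * U i) + βn i * (lam * V i))
          - ((γ i * (c - lam * U i) / (2 * c) * (ξ i + c) ^ 2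
               + γ i * (c - lam * V i) / (2 * c) * (ξ i - c) ^ 2)
             + ((γ i * (ξ i + c) ^ 2 / (2 * c) + βp i) * (lam * U i - ξ i)
              + (γ i * (ξ i - c) ^ 2 / (2 * c) + βn i) * (lam * V i + ξ i))
             + ((ξ i + c) ^ 2 / (4 * c) * (W i - ζ i)
              + (ξ i - c) ^ 2 / (4 * c) * (W' i + ζ i)))) := by
    refine Finset.sum_congr rfl fun i _ => ?_
    have hb : βp i = βn i + (W i - W' i) / 2 := by linarith [hβ i]
    rw [hγ i, hb]
    field_simp
    ring
  simp only [Finset.sum_add_distrib, Finset.sum_sub_distrib] at final ⊢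
  linarith [final]

end SOSAux

namespace SOSAux

/-- Extract weights indexed by `Fin n` from convex hull membership. -/
lemma conv_weights {n d : ℕ} {f : Fin n → (Fin d → ℝ)} {y : Fin d → ℝ}
    (h : y ∈ convexHull ℝ (Set.range f)) :
    ∃ μ : Fin n → ℝ, (∀ j, 0 ≤ μ j) ∧ (∑ j, μ j = 1) ∧ ∀ i, ∑ j, μ j * f j i = y i := by
  classical
  rw [convexHull_range_eq_exists_affineCombination] at h
  obtain ⟨s, wt, hw0, hw1, hy⟩ := h
  rw [Finset.affineCombination_eq_linear_combination s f wt hw1] at hy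
  refine ⟨fun j => if j ∈ s then wt j else 0, ?_, ?_, ?_⟩
  · intro j; dsimp only; split
    · exact hw0 j ‹_›
    · exact le_refl 0
  · rw [Finset.sum_ite_mem, Finset.univ_inter]; exact hw1
  · intro i
    have h1 : ∀ j, (if j ∈ s then wt j else 0) * f j i
        = if j ∈ s then wt j * f j i else 0 := by
      intro j; split <;> simp
    simp only [h1]
    rw [Finset.sum_ite_mem, Finset.univ_inter]
    have h2 := congrFun hy i
    rw [Finset.sum_apply] at h2
    simpa [smul_eq_mul] using h2

/-- Nonnegative representation from a point in the interior of the convex hull. -/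
lemma pos_combo {n d : ℕ} {f : Fin n → (Fin d → ℝ)}
    (h0 : (0 : Fin d → ℝ) ∈ interior (convexHull ℝ (Set.range f))) (y : Fin d → ℝ) :
    ∃ u : Fin n → ℝ, (∀ m, 0 ≤ u m) ∧ ∀ i, ∑ m, u m * f m i = y i := by
  obtain ⟨ε, hε, hball⟩ := Metric.mem_nhds_iff.mp (mem_interior_iff_mem_nhds.mp h0)
  by_cases hy : y = 0
  · exact ⟨0, fun m => le_refl 0, fun i => by simp [hy]⟩
  · have hny : 0 < ‖y‖ := norm_pos_iff.mpr hy
    set t : ℝ := ε / (2 * ‖y‖) with ht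
    have htpos : 0 < t := by positivity
    have hmem : t • y ∈ convexHull ℝ (Set.range f) := by
      apply hball
      rw [Metric.mem_ball, dist_zero_right, norm_smul, Real.norm_eq_abs, abs_of_pos htpos,
        ht, div_mul_eq_mul_div, div_lt_iff₀ (by positivity)]
      nlinarith
    obtain ⟨μ, hμ0, hμ1, hμ⟩ := conv_weights hmem
    refine ⟨fun m => μ m / t, fun m => div_nonneg (hμ0 m) htpos.le, fun i => ?_⟩
    have h2 : ∑ m, μ m * f m i = t * y i := by
      rw [hμ i, Pi.smul_apply, smul_eq_mul]
    calc ∑ m, μ m / t * f m i = (∑ m, μ m * f m i) / t := by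
          rw [Finset.sum_div]; exact Finset.sum_congr rfl fun m _ => by ring
      _ = t * y i / t := by rw [h2]
      _ = y i := by field_simp
/-- If `0` is not interior to the convex hull of finitely many points, there is a
nonzero direction nonpositive against all of them. -/
lemma exists_neg_dir {d n : ℕ} (hd : 0 < d) (f : Fin n → (Fin d → ℝ))
    (h0 : (0 : Fin d → ℝ) ∉ interior (convexHull ℝ (Set.range f))) :
    ∃ v : Fin d → ℝ, v ≠ 0 ∧ ∀ m, f m ⬝ᵥ v ≤ 0 := by
  classical
  set K := convexHull ℝ (Set.range f) with hK
  have hKc : Convex ℝ K := convex_convexHull ℝ _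
  have hsingle : ∀ i : Fin d, (fun j : Fin d => if i = j then (1:ℝ) else 0) = Pi.single i 1 := by
    intro i; ext j; simp [Pi.single_apply, eq_comm]
  by_cases hne : (interior K).Nonempty
  · -- separation from the open convex interior
    obtain ⟨φ, hφ⟩ := geometric_hahn_banach_open_point hKc.interior isOpen_interior h0
    obtain ⟨y₀, hy₀⟩ := hne
    have hy₀' : φ y₀ < φ 0 := hφ y₀ hy₀
    rw [map_zero] at hy₀'
    have hle : ∀ p ∈ K, φ p ≤ 0 := by
      intro p hp
      by_contra hcon
      push_neg at hcon
      set s : ℝ := φ p / (2 * (φ p - φ y₀)) with hs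
      have hd0 : 0 < φ p - φ y₀ := by linarith
      have hs0 : 0 < s := by positivity
      have hs2 : s * (φ p - φ y₀) = φ p / 2 := by
        rw [hs]; field_simp
      have hmem : s • y₀ + (1 - s) • p ∈ interior K :=
        hKc.combo_interior_closure_mem_interior hy₀ (subset_closure hp) hs0
          (by nlinarith) (by ring)
      have hlt := hφ _ hmem
      rw [map_zero, map_add, _root_.map_smul, _root_.map_smul, smul_eq_mul, smul_eq_mul] at hlt
      nlinarith
    set v : Fin d → ℝ := fun i => φ (Pi.single i 1) with hv
    have hdot : ∀ p : Fin d → ℝ, p ⬝ᵥ v = φ p := by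
      intro p
      conv_rhs => rw [pi_eq_sum_univ p]
      rw [map_sum]
      refine Finset.sum_congr rfl fun i _ => ?_
      rw [hsingle i, _root_.map_smul, smul_eq_mul]
    refine ⟨v, ?_, fun m => ?_⟩
    · intro hv0
      rw [← hdot y₀, hv0, dotProduct_zero] at hy₀'
      exact lt_irrefl 0 hy₀'
    · rw [hdot]
      exact hle (f m) (subset_convexHull ℝ _ (Set.mem_range_self m))
  · -- empty interior: all points lie in a proper affine subspace
    have hA : affineSpan ℝ (Set.range f) ≠ ⊤ := by
      intro htop
      apply hne
      rw [Convex.interior_nonempty_iff_affineSpan_eq_top hKc, hK, affineSpan_convexHull]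
      exact htop
    rcases Nat.eq_zero_or_pos n with hn | hn
    · subst hn
      refine ⟨Pi.single ⟨0, hd⟩ 1, ?_, fun m => m.elim0⟩
      intro hcon
      have := congrFun hcon ⟨0, hd⟩
      simp at this
    · have hnem : (Set.range f).Nonempty := ⟨f ⟨0, hn⟩, Set.mem_range_self _⟩
      have hV : vectorSpan ℝ (Set.range f) ≠ ⊤ := by
        intro htop
        exact hA ((AffineSubspace.affineSpan_eq_top_iff_vectorSpan_eq_top_of_nonempty
          ℝ (Fin d → ℝ) (Fin d → ℝ) hnem).mpr htop)
      obtain ⟨φ, hφ0, hφ⟩ := Submodule.exists_dual_map_eq_bot_of_lt_top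
        (lt_top_iff_ne_top.mpr hV) inferInstance
      have hker : ∀ x ∈ vectorSpan ℝ (Set.range f), φ x = 0 := by
        intro x hx
        have hmem : φ x ∈ Submodule.map φ (vectorSpan ℝ (Set.range f)) :=
          Submodule.mem_map_of_mem hx
        rw [hφ] at hmem
        simpa using hmem
      set v : Fin d → ℝ := fun i => φ (Pi.single i 1) with hv
      have hdot : ∀ p : Fin d → ℝ, p ⬝ᵥ v = φ p := by
        intro p
        conv_rhs => rw [pi_eq_sum_univ p]
        rw [map_sum]
        refine Finset.sum_congr rfl fun i _ => ?_
        rw [hsingle i, _root_.map_smul, smul_eq_mul]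
      have hvne : v ≠ 0 := by
        intro hcon
        apply hφ0
        refine LinearMap.ext fun p => ?_
        rw [← hdot p, hcon, dotProduct_zero]
        simp
      have hconst : ∀ m, φ (f m) = φ (f ⟨0, hn⟩) := by
        intro m
        have hmem : f m -ᵥ f ⟨0, hn⟩ ∈ vectorSpan ℝ (Set.range f) :=
          vsub_mem_vectorSpan ℝ (Set.mem_range_self m) (Set.mem_range_self _)
        have hz := hker _ hmem
        rw [vsub_eq_sub, map_sub] at hz
        linarith
      rcases le_or_gt (φ (f ⟨0, hn⟩)) 0 with hr | hr
      · exact ⟨v, hvne, fun m => by rw [hdot, hconst m]; exact hr⟩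
      · refine ⟨-v, neg_ne_zero.mpr hvne, fun m => ?_⟩
        rw [dotProduct_neg, hdot, hconst m]
        linarith

end SOSAux


set_option maxHeartbeats 2000000

/-- scaled containment: for an H-polytope P and a V-polytope Q,
both with 0 in the interior, some scaled copy λP fits in a box S with
λP ⊆ S ⊆ (1/√d)·Q, and consequently λP ⊆ Q is certified at the initial step
t = 2 of the sos hierarchy. -/
theorem scaled_containment_initial_step
    {d k l : ℕ} (hd : 0 < d)
    (a : Fin k → ℝ) (A : Fin k → Fin d → ℝ) (b : Fin l → Fin d → ℝ)
    (P : Set (Fin d → ℝ)) (hPdef : P = {x | ∀ i, 0 ≤ a i - A i ⬝ᵥ x})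
    (hPbd : Bornology.IsBounded P) (hP0 : (0 : Fin d → ℝ) ∈ interior P)
    (Q : Set (Fin d → ℝ)) (hQdef : Q = convexHull ℝ (Set.range b))
    (hQ0 : (0 : Fin d → ℝ) ∈ interior Q) :
    ∃ lam : ℝ, 0 < lam ∧
      (∃ c : Fin d → ℝ, (∀ i, 0 < c i) ∧
        {x : Fin d → ℝ | ∀ i, 0 ≤ lam * a i - A i ⬝ᵥ x}
          ⊆ {x : Fin d → ℝ | ∀ i, |x i| ≤ c i} ∧
        {x : Fin d → ℝ | ∀ i, |x i| ≤ c i} ⊆ (1 / Real.sqrt d) • Q) ∧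
      (∃ (σ₀ : MvPolynomial (Fin d ⊕ Fin d) ℝ)
         (σ : Fin k → MvPolynomial (Fin d ⊕ Fin d) ℝ)
         (τ : Fin l → MvPolynomial (Fin d ⊕ Fin d) ℝ),
         IsSOS σ₀ ∧ (∀ i, IsSOS (σ i)) ∧ (∀ j, IsSOS (τ j)) ∧
         σ₀.totalDegree ≤ 4 ∧
         (∀ i, (σ i).totalDegree ≤ 2) ∧ (∀ j, (τ j).totalDegree ≤ 2) ∧
         (1 : MvPolynomial (Fin d ⊕ Fin d) ℝ)
             - ∑ i : Fin d, X (Sum.inl i) * X (Sum.inr i) =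
           σ₀ + ∑ i : Fin k, σ i *
                  (C (lam * a i) - ∑ j : Fin d, C (A i j) * X (Sum.inl j))
              + ∑ j : Fin l, τ j *
                  (1 - ∑ i : Fin d, C (b j i) * X (Sum.inr i))) := by
  classical
  have hP0' : (0 : Fin d → ℝ) ∈ P := interior_subset hP0
  have ha0 : ∀ m, 0 ≤ a m := by
    rw [hPdef] at hP0'
    intro m
    have := hP0' m
    simpa using this
  -- Step: 0 is interior to the convex hull of the rows of A
  have hAint : (0 : Fin d → ℝ) ∈ interior (convexHull ℝ (Set.range A)) := by
    by_contra hcon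
    obtain ⟨vv, hvv, hvle⟩ := SOSAux.exists_neg_dir hd A hcon
    obtain ⟨R, hR⟩ := isBounded_iff_forall_norm_le.mp hPbd
    have hR0 : 0 ≤ R := le_trans (norm_nonneg _) (hR 0 hP0')
    have hvnorm : (0:ℝ) < ‖vv‖ := norm_pos_iff.mpr hvv
    have hmem : ∀ t : ℝ, 0 ≤ t → t • vv ∈ P := by
      intro t ht
      rw [hPdef]
      intro m
      have hdp : A m ⬝ᵥ (t • vv) = t * (A m ⬝ᵥ vv) := by
        simp only [dotProduct, Pi.smul_apply, smul_eq_mul, Finset.mul_sum]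
        exact Finset.sum_congr rfl fun i _ => by ring
      rw [hdp]
      have : t * (A m ⬝ᵥ vv) ≤ 0 := mul_nonpos_of_nonneg_of_nonpos ht (hvle m)
      have := ha0 m
      linarith
    have hbig := hR (((R + 1) / ‖vv‖) • vv) (hmem _ (by positivity))
    rw [norm_smul, Real.norm_eq_abs, abs_of_nonneg (by positivity),
      div_mul_cancel₀ _ hvnorm.ne'] at hbig
    linarith
  have hQint : (0 : Fin d → ℝ) ∈ interior (convexHull ℝ (Set.range b)) := hQdef ▸ hQ0
  -- Step: Farkas-type representations
  have hu' : ∀ i : Fin d, ∃ uu : Fin k → ℝ, (∀ m, 0 ≤ uu m) ∧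
      ∀ i', ∑ m, uu m * A m i' = if i = i' then (1:ℝ) else 0 :=
    fun i => SOSAux.pos_combo hAint (fun i' => if i = i' then (1:ℝ) else 0)
  have hv' : ∀ i : Fin d, ∃ uu : Fin k → ℝ, (∀ m, 0 ≤ uu m) ∧
      ∀ i', ∑ m, uu m * A m i' = if i = i' then (-1:ℝ) else 0 :=
    fun i => SOSAux.pos_combo hAint (fun i' => if i = i' then (-1:ℝ) else 0)
  have hw'' : ∀ i : Fin d, ∃ uu : Fin l → ℝ, (∀ j, 0 ≤ uu j) ∧
      ∀ i', ∑ j, uu j * b j i' = if i = i' then (1:ℝ) else 0 :=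
    fun i => SOSAux.pos_combo hQint (fun i' => if i = i' then (1:ℝ) else 0)
  have hw''' : ∀ i : Fin d, ∃ uu : Fin l → ℝ, (∀ j, 0 ≤ uu j) ∧
      ∀ i', ∑ j, uu j * b j i' = if i = i' then (-1:ℝ) else 0 :=
    fun i => SOSAux.pos_combo hQint (fun i' => if i = i' then (-1:ℝ) else 0)
  choose u hu0 hu using hu'
  choose v hv0 hv using hv'
  choose w hw0 hw using hw''
  choose w' hw'0 hw' using hw'''
  -- constants
  obtain ⟨W, hW⟩ : ∃ W : Fin d → ℝ, ∀ i, W i = ∑ j, w i j := ⟨_, fun _ => rfl⟩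
  obtain ⟨W', hW'⟩ : ∃ W' : Fin d → ℝ, ∀ i, W' i = ∑ j, w' i j := ⟨_, fun _ => rfl⟩
  obtain ⟨U, hU⟩ : ∃ U : Fin d → ℝ, ∀ i, U i = ∑ m, u i m * a m := ⟨_, fun _ => rfl⟩
  obtain ⟨V, hV⟩ : ∃ V : Fin d → ℝ, ∀ i, V i = ∑ m, v i m * a m := ⟨_, fun _ => rfl⟩
  have hW0 : ∀ i, 0 ≤ W i := fun i => by
    rw [hW]; exact Finset.sum_nonneg fun j _ => hw0 i j
  have hW'0 : ∀ i, 0 ≤ W' i := fun i => by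
    rw [hW']; exact Finset.sum_nonneg fun j _ => hw'0 i j
  have hU0 : ∀ i, 0 ≤ U i := fun i => by
    rw [hU]; exact Finset.sum_nonneg fun m _ => mul_nonneg (hu0 i m) (ha0 m)
  have hV0 : ∀ i, 0 ≤ V i := fun i => by
    rw [hV]; exact Finset.sum_nonneg fun m _ => mul_nonneg (hv0 i m) (ha0 m)
  obtain ⟨βp, hβp⟩ : ∃ βp : Fin d → ℝ, ∀ i, βp i = max ((W i - W' i)/2) 0 := ⟨_, fun _ => rfl⟩
  obtain ⟨βn, hβn⟩ : ∃ βn : Fin d → ℝ, ∀ i, βn i = max (-((W i - W' i)/2)) 0 := ⟨_, fun _ => rfl⟩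
  have hβp0 : ∀ i, 0 ≤ βp i := fun i => by rw [hβp]; exact le_max_right _ _
  have hβn0 : ∀ i, 0 ≤ βn i := fun i => by rw [hβn]; exact le_max_right _ _
  have hβ : ∀ i, βp i - βn i = (W i - W' i) / 2 := fun i => by
    rw [hβp, hβn]; exact max_zero_sub_max_neg_zero_eq_self _
  -- the ball inside Q
  obtain ⟨ε, hε, hball⟩ := Metric.mem_nhds_iff.mp (mem_interior_iff_mem_nhds.mp hQ0)
  obtain ⟨sd, hsdd⟩ : ∃ sd : ℝ, sd = Real.sqrt d := ⟨_, rfl⟩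
  have hsd : 0 < sd := by
    rw [hsdd]; exact Real.sqrt_pos.mpr (by exact_mod_cast hd)
  obtain ⟨Sw, hSwd⟩ : ∃ Sw : ℝ, Sw = ∑ i, (W i + W' i) := ⟨_, rfl⟩
  have hSw0 : 0 ≤ Sw := by
    rw [hSwd]; exact Finset.sum_nonneg fun i _ => add_nonneg (hW0 i) (hW'0 i)
  obtain ⟨c, hcd⟩ : ∃ c : ℝ, c = min (ε / (2 * sd)) (1 / (2 * (1 + Sw))) := ⟨_, rfl⟩
  have hc0 : 0 < c := by
    rw [hcd]
    exact lt_min (by positivity) (by positivity)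
  obtain ⟨MB, hMBd⟩ : ∃ MB : ℝ, MB = ∑ i, (βp i * U i + βn i * V i) := ⟨_, rfl⟩
  have hMB0 : 0 ≤ MB := by
    rw [hMBd]
    exact Finset.sum_nonneg fun i _ =>
      add_nonneg (mul_nonneg (hβp0 i) (hU0 i)) (mul_nonneg (hβn0 i) (hV0 i))
  obtain ⟨NUV, hNUVd⟩ : ∃ NUV : ℝ, NUV = ∑ i, (U i + V i) := ⟨_, rfl⟩
  have hNUV0 : 0 ≤ NUV := by
    rw [hNUVd]; exact Finset.sum_nonneg fun i _ => add_nonneg (hU0 i) (hV0 i)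
  have hUle : ∀ i, U i ≤ NUV := fun i => by
    rw [hNUVd]
    calc U i ≤ U i + V i := by linarith [hV0 i]
      _ ≤ _ := Finset.single_le_sum (fun j _ => add_nonneg (hU0 j) (hV0 j)) (Finset.mem_univ i)
  have hVle : ∀ i, V i ≤ NUV := fun i => by
    rw [hNUVd]
    calc V i ≤ U i + V i := by linarith [hU0 i]
      _ ≤ _ := Finset.single_le_sum (fun j _ => add_nonneg (hU0 j) (hV0 j)) (Finset.mem_univ i)
  obtain ⟨lam, hlamd⟩ : ∃ lam : ℝ, lam = min (c / (1 + NUV)) (1 / (2 * (1 + MB))) := ⟨_, rfl⟩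
  have hlam0 : 0 < lam := by
    rw [hlamd]
    exact lt_min (by positivity) (by positivity)
  have hlamU : ∀ i, lam * U i ≤ c := by
    intro i
    have h1 : U i ≤ 1 + NUV := by linarith [hUle i]
    have h2 : lam ≤ c / (1 + NUV) := hlamd ▸ min_le_left _ _
    calc lam * U i ≤ (c / (1 + NUV)) * (1 + NUV) :=
          mul_le_mul h2 h1 (hU0 i) (by positivity)
      _ = c := div_mul_cancel₀ _ (by positivity)
  have hlamV : ∀ i, lam * V i ≤ c := by
    intro i
    have h1 : V i ≤ 1 + NUV := by linarith [hVle i]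
    have h2 : lam ≤ c / (1 + NUV) := hlamd ▸ min_le_left _ _
    calc lam * V i ≤ (c / (1 + NUV)) * (1 + NUV) :=
          mul_le_mul h2 h1 (hV0 i) (by positivity)
      _ = c := div_mul_cancel₀ _ (by positivity)
  -- κ and its nonnegativity
  obtain ⟨κ, hκd⟩ : ∃ κ : ℝ, κ = 1 - (∑ i, (W i + W' i) * c / 2)
      - ∑ i, (βp i * (lam * U i) + βn i * (lam * V i)) := ⟨_, rfl⟩
  have hκ0 : 0 ≤ κ := by
    have hS1 : ∑ i, (W i + W' i) * c / 2 = Sw * (c / 2) := by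
      rw [hSwd, Finset.sum_mul]
      exact Finset.sum_congr rfl fun i _ => by ring
    have hc2 : c ≤ 1 / (2 * (1 + Sw)) := hcd ▸ min_le_right _ _
    have e1 : Sw * (1 / (2 * (1 + Sw))) ≤ 1 / 2 := by
      rw [mul_one_div, div_le_iff₀ (by positivity)]
      nlinarith
    have e2 : Sw * c ≤ Sw * (1 / (2 * (1 + Sw))) := mul_le_mul_of_nonneg_left hc2 hSw0
    have hS1le : ∑ i, (W i + W' i) * c / 2 ≤ 1 / 4 := by
      rw [hS1]; nlinarith
    have hS2 : ∑ i, (βp i * (lam * U i) + βn i * (lam * V i)) = lam * MB := by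
      rw [hMBd, Finset.mul_sum]
      exact Finset.sum_congr rfl fun i _ => by ring
    have hl2 : lam ≤ 1 / (2 * (1 + MB)) := hlamd ▸ min_le_right _ _
    have e3 : lam * MB ≤ (1 / (2 * (1 + MB))) * MB := mul_le_mul_of_nonneg_right hl2 hMB0
    have e4 : (1 / (2 * (1 + MB))) * MB ≤ 1 / 2 := by
      rw [one_div, inv_mul_le_iff₀ (by positivity)]
      nlinarith
    have hS2le : ∑ i, (βp i * (lam * U i) + βn i * (lam * V i)) ≤ 1 / 2 := by
      rw [hS2]; linarith
    rw [hκd]; linarith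
  obtain ⟨γ, hγ⟩ : ∃ γ : Fin d → ℝ, ∀ i, γ i = (W i + W' i) / (4 * c) := ⟨_, fun _ => rfl⟩
  have hγ0 : ∀ i, 0 ≤ γ i := fun i => by
    rw [hγ]
    exact div_nonneg (add_nonneg (hW0 i) (hW'0 i)) (by positivity)
  refine ⟨lam, hlam0, ⟨fun _ => c, fun _ => hc0, ?_, ?_⟩, ?_⟩
  · -- λP ⊆ box
    intro x hx i
    have hx' : ∀ m, 0 ≤ lam * a m - A m ⬝ᵥ x := hx
    have hdx : ∀ m, A m ⬝ᵥ x = ∑ i', A m i' * x i' := fun m => rfl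
    have k1 := SOSAux.contract (u i) a A x lam i 1 (hu i)
    have k2 := SOSAux.contract (v i) a A x lam i (-1) (hv i)
    have n1 : 0 ≤ ∑ m, u i m * (lam * a m - ∑ i', A m i' * x i') :=
      Finset.sum_nonneg fun m _ => mul_nonneg (hu0 i m) (by rw [← hdx m]; exact hx' m)
    have n2 : 0 ≤ ∑ m, v i m * (lam * a m - ∑ i', A m i' * x i') :=
      Finset.sum_nonneg fun m _ => mul_nonneg (hv0 i m) (by rw [← hdx m]; exact hx' m)
    rw [k1, ← hU i] at n1
    rw [k2, ← hV i] at n2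
    have hUi := hlamU i
    have hVi := hlamV i
    rw [abs_le]
    constructor <;> nlinarith
  · -- box ⊆ (1/√d) Q
    intro x hx
    have hxn : ‖x‖ ≤ c := (pi_norm_le_iff_of_nonneg hc0.le).mpr fun i => by
      rw [Real.norm_eq_abs]; exact hx i
    have hmem : sd • x ∈ Q := by
      apply hball
      rw [Metric.mem_ball, dist_zero_right, norm_smul, Real.norm_eq_abs, abs_of_pos hsd]
      have hcle : c ≤ ε / (2 * sd) := hcd ▸ min_le_left _ _
      calc sd * ‖x‖ ≤ sd * (ε / (2 * sd)) := by
            apply mul_le_mul_of_nonneg_left _ hsd.le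
            linarith
        _ = ε / 2 := by field_simp
        _ < ε := by linarith
    rw [← hsdd]
    exact Set.mem_smul_set.mpr
      ⟨sd • x, hmem, by rw [smul_smul, one_div, inv_mul_cancel₀ hsd.ne', one_smul]⟩
  · -- the degree-2 certificate
    have degp : ∀ (r : ℝ) (i : Fin d),
        ((C r * (X (Sum.inl i) + C c) ^ 2 : MvPolynomial (Fin d ⊕ Fin d) ℝ)).totalDegree ≤ 2 :=
      fun r i => SOSAux.deg_C_mul_sq_le r (SOSAux.deg_linp 0 c _)
    have degm : ∀ (r : ℝ) (i : Fin d),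
        ((C r * (X (Sum.inl i) - C c) ^ 2 : MvPolynomial (Fin d ⊕ Fin d) ℝ)).totalDegree ≤ 2 :=
      fun r i => SOSAux.deg_C_mul_sq_le r (SOSAux.deg_linm 0 c _)
    refine ⟨C κ + ∑ i, (C (γ i * (c - lam * U i) / (2 * c)) * (X (Sum.inl i) + C c) ^ 2
               + C (γ i * (c - lam * V i) / (2 * c)) * (X (Sum.inl i) - C c) ^ 2),
      fun m => ∑ i, (C (γ i * u i m / (2 * c)) * (X (Sum.inl i) + C c) ^ 2
                  + C (γ i * v i m / (2 * c)) * (X (Sum.inl i) - C c) ^ 2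
                  + C (βp i * u i m + βn i * v i m)),
      fun j => ∑ i, (C (w i j / (4 * c)) * (X (Sum.inl i) + C c) ^ 2
                  + C (w' i j / (4 * c)) * (X (Sum.inl i) - C c) ^ 2),
      ?_, ?_, ?_, ?_, ?_, ?_, ?_⟩
    · exact SOSAux.isSOS_add (SOSAux.isSOS_C hκ0)
        (SOSAux.isSOS_sum _ _ fun i _ => SOSAux.isSOS_add
          (SOSAux.isSOS_C_mul_sq
            (div_nonneg (mul_nonneg (hγ0 i) (by linarith [hlamU i])) (by positivity)) _)
          (SOSAux.isSOS_C_mul_sq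
            (div_nonneg (mul_nonneg (hγ0 i) (by linarith [hlamV i])) (by positivity)) _))
    · intro m
      exact SOSAux.isSOS_sum _ _ fun i _ => SOSAux.isSOS_add
        (SOSAux.isSOS_add
          (SOSAux.isSOS_C_mul_sq
            (div_nonneg (mul_nonneg (hγ0 i) (hu0 i m)) (by positivity)) _)
          (SOSAux.isSOS_C_mul_sq
            (div_nonneg (mul_nonneg (hγ0 i) (hv0 i m)) (by positivity)) _))
        (SOSAux.isSOS_C (add_nonneg (mul_nonneg (hβp0 i) (hu0 i m))
          (mul_nonneg (hβn0 i) (hv0 i m))))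
    · intro j
      exact SOSAux.isSOS_sum _ _ fun i _ => SOSAux.isSOS_add
        (SOSAux.isSOS_C_mul_sq (div_nonneg (hw0 i j) (by positivity)) _)
        (SOSAux.isSOS_C_mul_sq (div_nonneg (hw'0 i j) (by positivity)) _)
    · refine le_trans (totalDegree_add _ _) (max_le ?_ ?_)
      · simp [totalDegree_C]
      · refine le_trans (SOSAux.deg_sum_le _ _ 2 fun i _ => ?_) (by norm_num)
        exact le_trans (totalDegree_add _ _) (max_le (degp _ i) (degm _ i))
    · intro m
      refine SOSAux.deg_sum_le _ _ 2 fun i _ => ?_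
      refine le_trans (totalDegree_add _ _) (max_le ?_ ?_)
      · exact le_trans (totalDegree_add _ _) (max_le (degp _ i) (degm _ i))
      · exact le_trans (le_of_eq (totalDegree_C _)) (by norm_num)
    · intro j
      refine SOSAux.deg_sum_le _ _ 2 fun i _ => ?_
      exact le_trans (totalDegree_add _ _) (max_le (degp _ i) (degm _ i))
    · apply MvPolynomial.funext
      intro x
      simp only [map_sub, map_add, map_sum, _root_.map_mul, map_pow, _root_.map_one, eval_C, eval_X]
      exact SOSAux.cert_eval c lam hc0.ne' a A b u v w w' W W' U V βp βn γ κ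
        hu hv hw hw' hW hW' hU hV hβ hγ hκd
        (fun i => x (Sum.inl i)) (fun i => x (Sum.inr i))
end
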